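/- arXiv:1507.07397 — 2 statements merged into one kernel-verified Lean document; each statement's English description precedes it below -/
import Mathlib

section
/- Let Ω = [ā] = (√(a²+4) − a)/2 be a metallic ratio, a ≥ 1, with T = [[a,1],[1,0]], λ = 1/Ω = a + Ω, and U = −(T⁻¹)ᵀ. Then the sequence of primary resonances is generated by the primitive integer q̂ = 1, and the separation B₀ satisfies: B₀ = γ̃*_{q₁} = 5 with q₁ = 7 if a = 1; B₀ = γ̃*_{q₁} = a with q₁ = 3 if a = 2; and B₀ = γ̃*_{q₁} = a with q₁ = a±1 (both values of q₁) if a ≥ 3. -/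
open Real Filter Matrix

noncomputable section

/-- Orbit of the Gauss map `g(x) = {1/x}` starting at `Ω`:
`x₀ = Ω`, `x_{j+1} = g(x_j)`. -/
def gaussOrbit (Ω : ℝ) : ℕ → ℝ
  | 0 => Ω
  | j + 1 => Int.fract (1 / gaussOrbit Ω j)

/-- `cfA Ω j` is the partial quotient `a_{j+1}` of the continued fraction of `Ω`. -/
def cfA (Ω : ℝ) (j : ℕ) : ℤ := ⌊1 / gaussOrbit Ω j⌋

/-- The matrix `[[a, 1], [1, 0]]`. -/
def Acf (a : ℤ) : Matrix (Fin 2) (Fin 2) ℤ := !![a, 1; 1, 0]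

/-- The product `A₁ ⋯ A_m` with `A_i = [[a_i, 1], [1, 0]]`. -/
def cfMatProd (Ω : ℝ) (m : ℕ) : Matrix (Fin 2) (Fin 2) ℤ :=
  ((List.range m).map fun i => Acf (cfA Ω i)).prod

/-- `cfQ Ω (j+1) = q_j`:  `q₋₁ = 0`, `q₀ = 1`, `q_j = a_j q_{j-1} + q_{j-2}`. -/
def cfQ (Ω : ℝ) : ℕ → ℤ
  | 0 => 0
  | 1 => 1
  | j + 2 => cfA Ω j * cfQ Ω (j + 1) + cfQ Ω j

/-- `cfP Ω (j+1) = p_j`:  `p₋₁ = 1`, `p₀ = 0`, `p_j = a_j p_{j-1} + p_{j-2}`. -/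
def cfP (Ω : ℝ) : ℕ → ℤ
  | 0 => 1
  | 1 => 0
  | j + 2 => cfA Ω j * cfP Ω (j + 1) + cfP Ω j

/-- The vector convergent `w(j) = (q_j, p_j)`. -/
def wconv (Ω : ℝ) (j : ℕ) : Fin 2 → ℤ := ![cfQ Ω (j + 1), cfP Ω (j + 1)]

/-- The resonant convergent `v(j) = (−p_j, q_j)`. -/
def vconv (Ω : ℝ) (j : ℕ) : Fin 2 → ℤ := ![-cfP Ω (j + 1), cfQ Ω (j + 1)]

/-- A quadratic irrational number. -/
def IsQuadraticIrrational (Ω : ℝ) : Prop :=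
  Irrational Ω ∧ ∃ A B C : ℤ, A ≠ 0 ∧ (A : ℝ) * Ω ^ 2 + (B : ℝ) * Ω + (C : ℝ) = 0

end
noncomputable section

/-- `⟨k, ω⟩ = k₁ + k₂ Ω` for `ω = (1, Ω)`. -/
def pairω (Ω : ℝ) (k : Fin 2 → ℤ) : ℝ := (k 0 : ℝ) + (k 1 : ℝ) * Ω

/-- `|k|₁ = |k₁| + |k₂|`. -/
def norm1 (k : Fin 2 → ℤ) : ℤ := |k 0| + |k 1|

/-- `p⁰(q)`: the integer nearest to `qΩ`. -/
def p0 (Ω : ℝ) (q : ℤ) : ℤ := round ((q : ℝ) * Ω)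

/-- `k⁰(q) = (−p⁰(q), q)`. -/
def kzero (Ω : ℝ) (q : ℤ) : Fin 2 → ℤ := ![-p0 Ω q, q]

/-- The set `A` of quasi-resonances: vectors `k⁰(q)`, `q ≥ 1`, with `|⟨k,ω⟩| < 1/2`. -/
def inA (Ω : ℝ) (k : Fin 2 → ℤ) : Prop :=
  ∃ q : ℤ, 1 ≤ q ∧ k = kzero Ω q ∧ |pairω Ω k| < 1 / 2

/-- A quasi-resonance `k` is primitive if `U⁻¹k` is not a quasi-resonance. -/
def PrimitiveVec (Ω : ℝ) (U : Matrix (Fin 2) (Fin 2) ℤ) (k : Fin 2 → ℤ) : Prop :=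
  inA Ω k ∧ ¬inA Ω (U⁻¹.mulVec k)

/-- A primitive integer `q ≥ 1`. -/
def PrimitiveInt (Ω : ℝ) (U : Matrix (Fin 2) (Fin 2) ℤ) (q : ℤ) : Prop :=
  1 ≤ q ∧ PrimitiveVec Ω U (kzero Ω q)

/-- The resonant sequence `s(q, n) = Uⁿ k⁰(q)`. -/
def sres (Ω : ℝ) (U : Matrix (Fin 2) (Fin 2) ℤ) (q : ℤ) (n : ℕ) : Fin 2 → ℤ :=
  (U ^ n).mulVec (kzero Ω q)

/-- `U = σ (T⁻¹)ᵀ` with `σ = det T = (−1)^m` and `T = A₁⋯A_m`. -/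
def Umat (Ω : ℝ) (m : ℕ) : Matrix (Fin 2) (Fin 2) ℤ :=
  ((-1 : ℤ) ^ m) • ((cfMatProd Ω m)⁻¹)ᵀ

/-- The numerator `γ_k = |⟨k,ω⟩| · |k|₁`. -/
def gammaK (Ω : ℝ) (k : Fin 2 → ℤ) : ℝ := |pairω Ω k| * (norm1 k : ℝ)

/-- `K_q = |z_q|(1+Ω)/|c+bΩ²|`, where `z_q = cq + bpΩ`, `p = p⁰(q)`,
and `b, c` are the off-diagonal entries of `T = A₁⋯A_m = [[a,b],[c,d]]`. -/
def KqD (Ω : ℝ) (m : ℕ) (q : ℤ) : ℝ :=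
  |(cfMatProd Ω m 1 0 : ℝ) * (q : ℝ) + (cfMatProd Ω m 0 1 : ℝ) * (p0 Ω q : ℝ) * Ω| * (1 + Ω) /
    |(cfMatProd Ω m 1 0 : ℝ) + (cfMatProd Ω m 0 1 : ℝ) * Ω ^ 2|

/-- The limit numerator `γ*_q = |r_q| K_q` with `r_q = qΩ − p⁰(q)`. -/
def gammaStarQ (Ω : ℝ) (m : ℕ) (q : ℤ) : ℝ :=
  |(q : ℝ) * Ω - (p0 Ω q : ℝ)| * KqD Ω m q

end

noncomputable section

/-- The metallic ratio `Ω = [ā] = (√(a²+4) − a)/2`. -/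
def metΩ (a : ℤ) : ℝ := (Real.sqrt ((a : ℝ) ^ 2 + 4) - (a : ℝ)) / 2

/-- `T = [[a,1],[1,0]]` for a metallic ratio. -/
def metT (a : ℤ) : Matrix (Fin 2) (Fin 2) ℤ := !![a, 1; 1, 0]

/-- `U = −(T⁻¹)ᵀ` for a metallic ratio. -/
def metU (a : ℤ) : Matrix (Fin 2) (Fin 2) ℤ := (-1 : ℤ) • ((metT a)⁻¹)ᵀ

/-- `δ_q = cq² − (a−d)qp − bp² = q² − aqp − p²` for the metallic `T = [[a,1],[1,0]]`. -/
def metδ (a q : ℤ) : ℤ := q ^ 2 - a * q * p0 (metΩ a) q - (p0 (metΩ a) q) ^ 2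

/-- `γ*_q = Ω(1+Ω)|δ_q|/|c+bΩ²|` for a metallic ratio. -/
def metγ (a q : ℤ) : ℝ :=
  metΩ a * (1 + metΩ a) * |(metδ a q : ℝ)| / |1 + metΩ a ^ 2|

/-- Normalized limit numerator `γ̃*_q = γ*_q/γ*` for a metallic ratio (`q̂ = 1`). -/
def metγt (a q : ℤ) : ℝ := metγ a q / metγ a 1

/-- Primitive integer for a metallic ratio. -/
def metPrim (a q : ℤ) : Prop := PrimitiveInt (metΩ a) (metU a) q

/-- Essential primitive integer for a metallic ratio. -/
def metEssPrim (a q : ℤ) : Prop :=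
  metPrim a q ∧ Int.gcd (kzero (metΩ a) q 0) (kzero (metΩ a) q 1) = 1

/-- The separation `B₀`: the minimal `γ̃*_q` over essential primitive `q ≠ q̂ = 1`. -/
def metB0 (a : ℤ) : ℝ := sInf {y : ℝ | ∃ q : ℤ, metEssPrim a q ∧ q ≠ 1 ∧ y = metγt a q}

end

section Aux
open Matrix

-- ### basic facts about metΩ

theorem irrD (a : ℤ) (ha : 1 ≤ a) : Irrational (Real.sqrt ((a:ℝ)^2+4)) := by
  refine irrational_nrt_of_notint_nrt 2 (a^2+4) ?_ ?_ two_pos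
  · rw [Real.sq_sqrt] <;> push_cast <;> nlinarith
  · rintro ⟨y, hy⟩
    have h0 : (0:ℝ) ≤ Real.sqrt ((a:ℝ)^2+4) := Real.sqrt_nonneg _
    have h2 : Real.sqrt ((a:ℝ)^2+4) ^ 2 = (a:ℝ)^2+4 := by
      rw [Real.sq_sqrt]; nlinarith
    rw [hy] at h0 h2
    have hy2 : y^2 = a^2 + 4 := by exact_mod_cast h2
    have hy0 : 0 ≤ y := by exact_mod_cast h0
    have h3 : a + 1 ≤ y := by nlinarith
    have h4 : y ≤ a + 1 := by nlinarith
    have : y = a + 1 := le_antisymm h4 h3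
    subst this; ring_nf at hy2; omega

theorem met_irr (a : ℤ) (ha : 1 ≤ a) : Irrational (metΩ a) := by
  unfold metΩ
  have h := (irrD a ha).sub_intCast a
  have := h.div_intCast (m := 2) (by norm_num)
  simpa using this

theorem met_key (a : ℤ) (ha : 1 ≤ a) : metΩ a ^ 2 + a * metΩ a = 1 := by
  unfold metΩ
  have h2 : Real.sqrt ((a:ℝ)^2+4) ^ 2 = (a:ℝ)^2+4 := by
    rw [Real.sq_sqrt]; nlinarith
  linear_combination h2/4

theorem met_pos (a : ℤ) (ha : 1 ≤ a) : 0 < metΩ a := by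
  unfold metΩ
  have h2 : ((a:ℝ)) < Real.sqrt ((a:ℝ)^2+4) := by
    have := Real.lt_sqrt (x := (a:ℝ)) (y := (a:ℝ)^2+4) (by positivity)
    rw [this]; norm_num
  linarith

theorem met_lt_one (a : ℤ) (ha : 1 ≤ a) : metΩ a < 1 := by
  have h := met_key a ha
  have h0 := met_pos a ha
  have ha' : (1:ℝ) ≤ a := by exact_mod_cast ha
  nlinarith

theorem met_irr_q (a : ℤ) (ha : 1 ≤ a) {q : ℤ} (hq : q ≠ 0) :
    Irrational ((q:ℝ) * metΩ a) := (met_irr a ha).intCast_mul hq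

theorem abs_r_lt (a : ℤ) (ha : 1 ≤ a) {q : ℤ} (hq : q ≠ 0) :
    |(q:ℝ) * metΩ a - (p0 (metΩ a) q : ℝ)| < 1/2 := by
  unfold p0
  rcases lt_or_eq_of_le (abs_sub_round ((q:ℝ) * metΩ a)) with h | h
  · exact h
  · exfalso
    have hi : Irrational ((q:ℝ) * metΩ a) := met_irr_q a ha hq
    rcases (abs_eq (by norm_num : (0:ℝ) ≤ 1/2)).mp h with h' | h'
    · exact hi ⟨((round ((q:ℝ) * metΩ a) : ℤ) : ℚ) + 1/2, by push_cast; linarith⟩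
    · exact hi ⟨((round ((q:ℝ) * metΩ a) : ℤ) : ℚ) - 1/2, by push_cast; linarith⟩

theorem round_eq_of_abs {x : ℝ} {n : ℤ} (h : |x - n| < 1/2) : round x = n := by
  rw [round_eq, Int.floor_eq_iff]
  rcases abs_lt.mp h with ⟨h1, h2⟩
  constructor <;> [skip; push_cast] <;> linarith

theorem p0_nonneg {Ω : ℝ} (hΩ : 0 ≤ Ω) {q : ℤ} (hq : 0 ≤ q) : 0 ≤ p0 Ω q := by
  unfold p0
  have h : (0:ℝ) ≤ (q:ℝ) * Ω := by positivity
  calc (0:ℤ) = round (0:ℝ) := by simp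
  _ ≤ round ((q:ℝ)*Ω) := by rw [round_eq, round_eq]; apply Int.floor_mono; linarith

-- ### matrices

theorem metT_inv (a : ℤ) : (metT a)⁻¹ = !![0, 1; 1, -a] := by
  apply Matrix.inv_eq_right_inv
  ext i j; fin_cases i <;> fin_cases j <;> simp [metT, Matrix.mul_fin_two]

theorem metU_eq (a : ℤ) : metU a = !![0, -1; -1, a] := by
  rw [metU, metT_inv]
  ext i j; fin_cases i <;> fin_cases j <;> simp [Matrix.transpose]

theorem metU_inv (a : ℤ) : (metU a)⁻¹ = !![-a, -1; -1, 0] := by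
  rw [metU_eq]
  apply Matrix.inv_eq_right_inv
  ext i j; fin_cases i <;> fin_cases j <;> simp [Matrix.mul_fin_two]

theorem metU_inv_mulVec (a q : ℤ) :
    (metU a)⁻¹.mulVec (kzero (metΩ a) q) = ![a * p0 (metΩ a) q - q, p0 (metΩ a) q] := by
  rw [metU_inv]
  ext i; fin_cases i <;>
    simp [Matrix.mulVec, dotProduct, Fin.sum_univ_two, kzero] <;> ring

-- ### inA

theorem inA_iff (Ω : ℝ) (k : Fin 2 → ℤ) :
    inA Ω k ↔ 1 ≤ k 1 ∧ k 0 = -(p0 Ω (k 1)) ∧ |pairω Ω k| < 1/2 := by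
  constructor
  · rintro ⟨q, hq, hk, habs⟩
    have h1 : k 1 = q := by rw [hk]; rfl
    have h0 : k 0 = -(p0 Ω q) := by rw [hk]; rfl
    exact ⟨h1 ▸ hq, by rw [h0, h1], habs⟩
  · rintro ⟨h1, h0, habs⟩
    refine ⟨k 1, h1, ?_, habs⟩
    funext i
    fin_cases i
    · exact h0
    · rfl

theorem inA_kzero (a : ℤ) (ha : 1 ≤ a) {q : ℤ} (hq : 1 ≤ q) :
    inA (metΩ a) (kzero (metΩ a) q) := by
  refine ⟨q, hq, rfl, ?_⟩
  have := abs_r_lt a ha (q := q) (by omega)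
  have h2 : pairω (metΩ a) (kzero (metΩ a) q) = (q:ℝ) * metΩ a - (p0 (metΩ a) q : ℝ) := by
    simp [pairω, kzero]; ring
  rw [h2]; exact this

-- ### primitivity characterization

theorem met_lam (a : ℤ) (ha : 1 ≤ a) : metΩ a * (a + metΩ a) = 1 := by
  linear_combination met_key a ha

theorem met_lam_pos (a : ℤ) (ha : 1 ≤ a) : 0 < (a:ℝ) + metΩ a := by
  have := met_pos a ha
  have : (1:ℝ) ≤ a := by exact_mod_cast ha
  linarith [met_pos a ha]

theorem key_id (a : ℤ) (ha : 1 ≤ a) (q : ℤ) :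
    (p0 (metΩ a) q : ℝ) * metΩ a + a * p0 (metΩ a) q - q
      = -((q:ℝ) * metΩ a - (p0 (metΩ a) q : ℝ)) * ((a:ℝ) + metΩ a) := by
  linear_combination (q:ℝ) * met_key a ha

theorem prim_of (a : ℤ) (ha : 1 ≤ a) {q : ℤ} (hq : 1 ≤ q)
    (h : metΩ a / 2 < |(q:ℝ) * metΩ a - (p0 (metΩ a) q : ℝ)|) : metPrim a q := by
  refine ⟨hq, inA_kzero a ha hq, ?_⟩
  rw [metU_inv_mulVec, inA_iff]
  push_neg
  intro hp h0
  exfalso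
  set p := p0 (metΩ a) q with hpdef
  have h0' : (p0 (metΩ a) p : ℝ) = (q:ℝ) - a * p := by
    have : a * p - q = -(p0 (metΩ a) p) := by simpa using h0
    have : (p0 (metΩ a) p) = q - a * p := by omega
    exact_mod_cast congrArg (Int.cast : ℤ → ℝ) this
  have habs := abs_sub_round ((p:ℝ) * metΩ a)
  rw [show round ((p:ℝ) * metΩ a) = p0 (metΩ a) p from rfl, h0'] at habs
  have hid : (p:ℝ) * metΩ a - ((q:ℝ) - a * p)
      = -((q:ℝ) * metΩ a - (p:ℝ)) * ((a:ℝ) + metΩ a) := by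
    linear_combination key_id a ha q
  rw [hid, abs_mul, abs_neg, abs_of_pos (met_lam_pos a ha)] at habs
  have hgt : 1/2 < |(q:ℝ) * metΩ a - (p:ℝ)| * ((a:ℝ) + metΩ a) := by
    have h2 := mul_lt_mul_of_pos_right h (met_lam_pos a ha)
    have h3 : metΩ a / 2 * ((a:ℝ) + metΩ a) = 1/2 := by
      linear_combination (met_lam a ha) / 2
    linarith
  linarith

theorem prim_r (a : ℤ) (ha : 1 ≤ a) {q : ℤ} (h : metPrim a q)
    (hp : 1 ≤ p0 (metΩ a) q) :
    metΩ a / 2 < |(q:ℝ) * metΩ a - (p0 (metΩ a) q : ℝ)| := by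
  obtain ⟨hq, _, hnot⟩ := h
  by_contra hle
  push_neg at hle
  set p := p0 (metΩ a) q with hpdef
  have hlt : |(q:ℝ) * metΩ a - (p:ℝ)| < metΩ a / 2 := by
    rcases lt_or_eq_of_le hle with h' | h'
    · exact h'
    · exfalso
      rcases (abs_eq (by linarith [met_pos a ha] : (0:ℝ) ≤ metΩ a / 2)).mp h' with h2 | h2
      · have hc : ((2*q-1 : ℤ):ℝ) * metΩ a = ((2*p : ℤ):ℝ) := by push_cast; linarith
        exact (met_irr_q a ha (q := 2*q-1) (by omega)) ⟨((2*p : ℤ):ℚ), by push_cast at hc ⊢; linarith⟩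
      · have hc : ((2*q+1 : ℤ):ℝ) * metΩ a = ((2*p : ℤ):ℝ) := by push_cast; linarith
        exact (met_irr_q a ha (q := 2*q+1) (by omega)) ⟨((2*p : ℤ):ℚ), by push_cast at hc ⊢; linarith⟩
  have hbound : |(q:ℝ) * metΩ a - (p:ℝ)| * ((a:ℝ) + metΩ a) < 1/2 := by
    have h2 := mul_lt_mul_of_pos_right hlt (met_lam_pos a ha)
    have h3 : metΩ a / 2 * ((a:ℝ) + metΩ a) = 1/2 := by
      linear_combination (met_lam a ha) / 2
    linarith
  have hid : (p:ℝ) * metΩ a - ((q:ℝ) - a * p)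
      = -((q:ℝ) * metΩ a - (p:ℝ)) * ((a:ℝ) + metΩ a) := by
    linear_combination key_id a ha q
  have hround : p0 (metΩ a) p = q - a * p := by
    apply round_eq_of_abs
    push_cast
    rw [hid, abs_mul, abs_neg, abs_of_pos (met_lam_pos a ha)]
    exact hbound
  apply hnot
  rw [metU_inv_mulVec, inA_iff]
  simp only [Matrix.cons_val_zero, Matrix.cons_val_one, Matrix.head_cons, ← hpdef]
  refine ⟨hp, by rw [hround]; ring, ?_⟩
  have hpair : pairω (metΩ a) ![a * p - q, p]
      = -((q:ℝ) * metΩ a - (p:ℝ)) * ((a:ℝ) + metΩ a) := by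
    simp only [pairω, Matrix.cons_val_zero, Matrix.cons_val_one, Matrix.head_cons]
    push_cast
    linear_combination key_id a ha q
  rw [hpair, abs_mul, abs_neg, abs_of_pos (met_lam_pos a ha)]
  exact hbound

-- ### delta and gamma

theorem delta_formula (a : ℤ) (ha : 1 ≤ a) (q : ℤ) :
    ((metδ a q : ℤ) : ℝ)
      = ((q:ℝ) * metΩ a - (p0 (metΩ a) q : ℝ))
        * ((q:ℝ) * ((a:ℝ) + metΩ a) + (p0 (metΩ a) q : ℝ)) := by
  unfold metδ
  push_cast
  linear_combination (-(q:ℝ)^2) * met_lam a ha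

theorem lam_q_pos (a : ℤ) (ha : 1 ≤ a) {q : ℤ} (hq : 1 ≤ q) :
    0 < (q:ℝ) * ((a:ℝ) + metΩ a) + (p0 (metΩ a) q : ℝ) := by
  have h1 : (1:ℝ) ≤ q := by exact_mod_cast hq
  have h2 : (0:ℤ) ≤ p0 (metΩ a) q := p0_nonneg (met_pos a ha).le (by omega)
  have h2' : (0:ℝ) ≤ (p0 (metΩ a) q : ℝ) := by exact_mod_cast h2
  nlinarith [met_lam_pos a ha]

theorem abs_delta (a : ℤ) (ha : 1 ≤ a) {q : ℤ} (hq : 1 ≤ q) :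
    (|metδ a q| : ℝ)
      = |(q:ℝ) * metΩ a - (p0 (metΩ a) q : ℝ)|
        * ((q:ℝ) * ((a:ℝ) + metΩ a) + (p0 (metΩ a) q : ℝ)) := by
  push_cast [Int.cast_abs]
  rw [delta_formula a ha q, abs_mul, abs_of_pos (lam_q_pos a ha hq)]

theorem met_half (a : ℤ) (ha : 2 ≤ a) : metΩ a < 1/2 := by
  have h := met_key a (by omega)
  have h0 := met_pos a (by omega)
  have ha' : (2:ℝ) ≤ a := by exact_mod_cast ha
  nlinarith

theorem met_half_one : 1/2 < metΩ 1 := by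
  have h := met_key 1 (by omega)
  have h0 := met_pos 1 (by omega)
  have h1 := met_lt_one 1 (by omega)
  push_cast at h
  nlinarith

theorem p0_one_eq (a : ℤ) (ha : 2 ≤ a) : p0 (metΩ a) 1 = 0 := by
  unfold p0
  apply round_eq_of_abs
  have h0 := met_pos a (by omega)
  have h1 := met_half a ha
  rw [abs_of_pos (by push_cast; linarith)]
  push_cast; linarith

theorem p0_one_one : p0 (metΩ 1) 1 = 1 := by
  unfold p0
  apply round_eq_of_abs
  have h0 := met_half_one
  have h1 := met_lt_one 1 (by omega)
  rw [abs_of_nonpos (by push_cast; linarith)]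
  push_cast; linarith

theorem abs_delta_one (a : ℤ) (ha : 1 ≤ a) : |metδ a 1| = 1 := by
  rcases eq_or_lt_of_le ha with h | h
  · rw [← h]; unfold metδ; rw [p0_one_one]; ring_nf
  · unfold metδ; rw [p0_one_eq a (by omega)]; ring_nf; rfl

theorem metγ_eq (a : ℤ) (ha : 1 ≤ a) (q : ℤ) :
    metγ a q = (metΩ a * (1 + metΩ a) / (1 + metΩ a ^ 2)) * (|metδ a q| : ℝ) := by
  unfold metγ
  have h0 := met_pos a ha
  rw [abs_of_pos (by nlinarith : (0:ℝ) < 1 + metΩ a ^ 2)]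
  push_cast [Int.cast_abs]
  ring

theorem metC_pos (a : ℤ) (ha : 1 ≤ a) :
    0 < metΩ a * (1 + metΩ a) / (1 + metΩ a ^ 2) := by
  have h0 := met_pos a ha
  positivity

theorem metγ_one (a : ℤ) (ha : 1 ≤ a) :
    metγ a 1 = metΩ a * (1 + metΩ a) / (1 + metΩ a ^ 2) := by
  have h : |((metδ a 1 : ℤ) : ℝ)| = 1 := by
    rw [← Int.cast_abs, abs_delta_one a ha]; norm_num
  rw [metγ_eq a ha, h, mul_one]

-- ### claim 2 : primitive q ≥ 2 has |δ| ≥ 2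

theorem two_le_delta (a : ℤ) (ha : 1 ≤ a) {q : ℤ} (hq : 2 ≤ q) (h : metPrim a q) :
    2 ≤ |metδ a q| := by
  have hq' : (1:ℤ) ≤ q := by omega
  have hΩ := met_pos a ha
  have hp0 : 0 ≤ p0 (metΩ a) q := p0_nonneg hΩ.le (by omega)
  rcases eq_or_lt_of_le hp0 with hp | hp
  · unfold metδ
    rw [← hp]
    have h4 : 4 ≤ q^2 := by nlinarith
    have : q ^ 2 - a * q * 0 - 0 ^ 2 = q^2 := by ring
    rw [this, abs_of_nonneg (by nlinarith)]
    omega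
  · have hr := prim_r a ha h hp
    have hL := lam_q_pos a ha hq'
    have hlam := met_lam a ha
    have hlp := met_lam_pos a ha
    have hqr : (2:ℝ) ≤ (q:ℝ) := by exact_mod_cast hq
    have hpr : (1:ℝ) ≤ (p0 (metΩ a) q : ℝ) := by exact_mod_cast hp
    have h1 : 2*((a:ℝ) + metΩ a) ≤ (q:ℝ)*((a:ℝ) + metΩ a) + (p0 (metΩ a) q : ℝ) := by
      nlinarith
    have h2 : (1:ℝ) < |((metδ a q : ℤ):ℝ)| := by
      rw [abs_delta a ha hq']
      calc (1:ℝ) = metΩ a/2 * (2*((a:ℝ) + metΩ a)) := by linear_combination (-1:ℝ) * hlam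
      _ ≤ metΩ a/2 * ((q:ℝ)*((a:ℝ) + metΩ a) + (p0 (metΩ a) q : ℝ)) := by nlinarith
      _ < _ := mul_lt_mul_of_pos_right hr hL
    have h3 : (1:ℤ) < |metδ a q| := by
      rw [← Int.cast_abs] at h2; exact_mod_cast h2
    omega

theorem prim_one (a : ℤ) (ha : 1 ≤ a) : metPrim a 1 := by
  apply prim_of a ha le_rfl
  rcases eq_or_lt_of_le ha with h | h
  · rw [← h]
    rw [p0_one_one]
    have h0 := met_half_one
    have h1 := met_lt_one 1 (by omega)
    have hk := met_key 1 (by omega)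
    push_cast at hk ⊢
    rw [abs_of_nonpos (by linarith)]
    nlinarith
  · rw [p0_one_eq a (by omega)]
    have h0 := met_pos a ha
    push_cast
    rw [abs_of_pos (by linarith)]
    linarith

theorem part2 (a : ℤ) (ha : 1 ≤ a) {q : ℤ} (hprim : metPrim a q) (hne : q ≠ 1) :
    metγ a 1 < metγ a q := by
  have hq : 1 ≤ q := hprim.1
  have hq2 : 2 ≤ q := by omega
  have h2 := two_le_delta a ha hq2 hprim
  rw [metγ_one a ha, metγ_eq a ha q]
  have hC := metC_pos a ha
  have h3 : (2:ℝ) ≤ |((metδ a q : ℤ):ℝ)| := by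
    rw [← Int.cast_abs]; exact_mod_cast h2
  nlinarith

-- ### metγt

theorem metγt_eq (a : ℤ) (ha : 1 ≤ a) (q : ℤ) :
    metγt a q = |((metδ a q : ℤ) : ℝ)| := by
  unfold metγt
  rw [metγ_eq a ha q, metγ_one a ha, mul_comm, mul_div_assoc,
    div_self (ne_of_gt (metC_pos a ha)), mul_one]

-- ### witnesses q = a+1, a-1

theorem met_aΩ (a : ℤ) (ha : 1 ≤ a) : (a:ℝ) * metΩ a = 1 - metΩ a ^ 2 := by
  linear_combination met_key a ha

theorem p0_succ (a : ℤ) (ha : 2 ≤ a) : p0 (metΩ a) (a+1) = 1 := by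
  apply round_eq_of_abs
  have hk := met_aΩ a (by omega)
  have h0 := met_pos a (by omega)
  have hh := met_half a ha
  have : ((a+1 : ℤ):ℝ) * metΩ a - ((1:ℤ):ℝ) = metΩ a - metΩ a ^ 2 := by
    push_cast; linear_combination hk
  rw [this, abs_of_pos (by nlinarith)]
  nlinarith

theorem delta_succ (a : ℤ) (ha : 2 ≤ a) : metδ a (a+1) = a := by
  unfold metδ; rw [p0_succ a ha]; ring

theorem prim_succ (a : ℤ) (ha : 2 ≤ a) : metPrim a (a+1) := by
  apply prim_of a (by omega) (by omega)
  rw [p0_succ a ha]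
  have hk := met_aΩ a (by omega)
  have h0 := met_pos a (by omega)
  have hh := met_half a ha
  have : ((a+1 : ℤ):ℝ) * metΩ a - ((1:ℤ):ℝ) = metΩ a - metΩ a ^ 2 := by
    push_cast; linear_combination hk
  rw [this, abs_of_pos (by nlinarith)]
  nlinarith

theorem ess_succ (a : ℤ) (ha : 2 ≤ a) : metEssPrim a (a+1) := by
  refine ⟨prim_succ a ha, ?_⟩
  have h0 : kzero (metΩ a) (a+1) 0 = -1 := by
    simp [kzero, p0_succ a ha]
  have h1 : kzero (metΩ a) (a+1) 1 = a+1 := rfl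
  rw [h0, h1]
  simp [Int.gcd]

theorem met_third (a : ℤ) (ha : 3 ≤ a) : metΩ a < 1/3 := by
  have hk := met_aΩ a (by omega)
  have h0 := met_pos a (by omega)
  have ha' : (3:ℝ) ≤ a := by exact_mod_cast ha
  nlinarith

theorem p0_pred (a : ℤ) (ha : 3 ≤ a) : p0 (metΩ a) (a-1) = 1 := by
  apply round_eq_of_abs
  have hk := met_aΩ a (by omega)
  have h0 := met_pos a (by omega)
  have hh := met_third a ha
  have : ((a-1 : ℤ):ℝ) * metΩ a - ((1:ℤ):ℝ) = -(metΩ a + metΩ a ^ 2) := by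
    push_cast; linear_combination hk
  rw [this, abs_neg, abs_of_pos (by nlinarith)]
  nlinarith

theorem delta_pred (a : ℤ) (ha : 3 ≤ a) : metδ a (a-1) = -a := by
  unfold metδ; rw [p0_pred a ha]; ring

theorem prim_pred (a : ℤ) (ha : 3 ≤ a) : metPrim a (a-1) := by
  apply prim_of a (by omega) (by omega)
  rw [p0_pred a ha]
  have hk := met_aΩ a (by omega)
  have h0 := met_pos a (by omega)
  have hh := met_third a ha
  have : ((a-1 : ℤ):ℝ) * metΩ a - ((1:ℤ):ℝ) = -(metΩ a + metΩ a ^ 2) := by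
    push_cast; linear_combination hk
  rw [this, abs_neg, abs_of_pos (by nlinarith)]
  nlinarith

theorem ess_pred (a : ℤ) (ha : 3 ≤ a) : metEssPrim a (a-1) := by
  refine ⟨prim_pred a ha, ?_⟩
  have h0 : kzero (metΩ a) (a-1) 0 = -1 := by
    simp [kzero, p0_pred a ha]
  have h1 : kzero (metΩ a) (a-1) 1 = a-1 := rfl
  rw [h0, h1]
  simp [Int.gcd]

-- ### a = 1, q = 7

theorem met1_lb : 8/13 < metΩ 1 := by
  have hk := met_key 1 (by omega)
  have h0 := met_pos 1 (by omega)
  push_cast at hk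
  nlinarith

theorem met1_ub : metΩ 1 < 9/14 := by
  have hk := met_key 1 (by omega)
  have h0 := met_pos 1 (by omega)
  push_cast at hk
  nlinarith

theorem p0_seven : p0 (metΩ 1) 7 = 4 := by
  apply round_eq_of_abs
  have h1 := met1_lb
  have h2 := met1_ub
  rw [abs_of_pos (by push_cast; nlinarith)]
  push_cast; nlinarith

theorem delta_seven : metδ 1 7 = 5 := by
  unfold metδ; rw [p0_seven]; ring

theorem prim_seven : metPrim 1 7 := by
  apply prim_of 1 (by omega) (by omega)
  rw [p0_seven]
  have h1 := met1_lb
  have h2 := met1_ub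
  rw [abs_of_pos (by push_cast; nlinarith)]
  push_cast; nlinarith

theorem ess_seven : metEssPrim 1 7 := by
  refine ⟨prim_seven, ?_⟩
  have h0 : kzero (metΩ 1) 7 0 = -4 := by simp [kzero, p0_seven]
  have h1 : kzero (metΩ 1) 7 1 = 7 := rfl
  rw [h0, h1]
  decide

-- ### essential auxiliary

theorem ess_p_pos (a : ℤ) (ha : 1 ≤ a) {q : ℤ} (hq : 2 ≤ q) (hess : metEssPrim a q) :
    1 ≤ p0 (metΩ a) q := by
  have h0 : 0 ≤ p0 (metΩ a) q := p0_nonneg (met_pos a ha).le (by omega)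
  rcases eq_or_lt_of_le h0 with h | h
  · exfalso
    have hg := hess.2
    have h0' : kzero (metΩ a) q 0 = 0 := by simp [kzero, ← h]
    rw [h0', (rfl : kzero (metΩ a) q 1 = q)] at hg
    rw [Int.gcd_zero_left] at hg
    have hq1 : q.natAbs = 1 := hg
    omega
  · omega

theorem ess_gcd (a : ℤ) {q : ℤ} (hess : metEssPrim a q) :
    Int.gcd (p0 (metΩ a) q) q = 1 := by
  have hg := hess.2
  have h0' : kzero (metΩ a) q 0 = -(p0 (metΩ a) q) := rfl
  rw [h0', (rfl : kzero (metΩ a) q 1 = q)] at hg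
  rwa [Int.neg_gcd] at hg

-- ### main lower bound for essential primitive q, a ≥ 2

theorem a_le_delta (a : ℤ) (ha : 2 ≤ a) {q : ℤ} (hq : 2 ≤ q) (hess : metEssPrim a q) :
    a ≤ |metδ a q| := by
  have ha1 : (1:ℤ) ≤ a := by omega
  have hq1 : (1:ℤ) ≤ q := by omega
  have hp1 : 1 ≤ p0 (metΩ a) q := ess_p_pos a ha1 hq hess
  have hprim := hess.1
  by_contra hcon
  push_neg at hcon
  have hd : |metδ a q| ≤ a - 1 := by omega
  set Ω := metΩ a with hΩdef
  set p := p0 (metΩ a) q with hpdef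
  have hΩ0 := met_pos a ha1
  have hlam := met_lam a ha1
  have hlp := met_lam_pos a ha1
  have hh := met_half a ha
  have hr := prim_r a ha1 hprim hp1
  have habs := abs_delta a ha1 hq1
  have hX := lam_q_pos a ha1 hq1
  have hdR : |((metδ a q : ℤ):ℝ)| ≤ (a:ℝ) - 1 := by
    have h' : ((|metδ a q| : ℤ):ℝ) ≤ ((a - 1 : ℤ):ℝ) := by exact_mod_cast hd
    push_cast [Int.cast_abs] at h'
    convert h' using 2 <;> push_cast <;> ring
  have hrlt := abs_r_lt a ha1 (q := q) (by omega)
  have hpr : (1:ℝ) ≤ (p:ℝ) := by exact_mod_cast hp1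
  have hqr : (2:ℝ) ≤ (q:ℝ) := by exact_mod_cast hq
  have har : (2:ℝ) ≤ (a:ℝ) := by exact_mod_cast ha
  have h1 : (q:ℝ) + (p:ℝ) * Ω < 2*(a:ℝ) - 2 := by
    have e1 : Ω/2 * ((q:ℝ)*((a:ℝ)+Ω) + (p:ℝ)) = ((q:ℝ) + (p:ℝ)*Ω)/2 := by
      linear_combination ((q:ℝ)/2) * hlam
    have e2 := mul_lt_mul_of_pos_right hr hX
    rw [← habs] at e2
    nlinarith [e2, hdR, e1]
  have hq2a : q ≤ 2*a - 3 := by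
    have hql : (q:ℝ) < 2*(a:ℝ) - 2 := by nlinarith [mul_pos (lt_of_lt_of_le one_pos hpr) hΩ0]
    have : q < 2*a - 2 := by exact_mod_cast hql
    omega
  rcases abs_lt.mp hrlt with ⟨hr1, hr2⟩
  have h2 : ((p:ℝ) - 1/2) * ((a:ℝ)+Ω) < (q:ℝ) := by
    have e3 : (p:ℝ) - 1/2 < (q:ℝ)*Ω := by linarith
    have e4 := mul_lt_mul_of_pos_right e3 hlp
    nlinarith [hlam, e4]
  have hp2 : p ≤ 2 := by
    by_contra hp3
    push_neg at hp3
    have h3 : (3:ℝ) ≤ (p:ℝ) := by exact_mod_cast hp3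
    nlinarith [h2, h1, hΩ0, hlp]
  have hp12 : p = 1 ∨ p = 2 := by omega
  rcases hp12 with hp' | hp'
  · -- p = 1
    have h3 : (a:ℝ) < 2*(q:ℝ) := by rw [hp'] at h2; push_cast at h2; nlinarith
    have h4 : a + 1 ≤ 2*q := by
      have : a < 2*q := by exact_mod_cast h3
      omega
    have hδ : metδ a q = q^2 - a*q - 1 := by unfold metδ; rw [← hpdef, hp']; ring
    rcases eq_or_ne q a with hqa | hqa
    · have hneg : (q:ℝ)*Ω - (p:ℝ) = -(Ω^2) := by
        rw [hqa, hp']; push_cast; linear_combination met_aΩ a ha1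
      rw [hneg, abs_neg, abs_of_pos (by positivity)] at hr
      nlinarith [hΩ0, hh]
    · rcases abs_le.mp hd with ⟨hd1, hd2⟩
      rw [hδ] at hd1 hd2
      rcases lt_or_gt_of_ne hqa with hlt | hgt
      · have h5 : (0:ℤ) ≤ (a - 1 - q) * (q - 1) := mul_nonneg (by omega) (by omega)
        have h6 : (a - 1 - q) * (q - 1) = (a*q - q^2) - (a-1) := by ring
        linarith
      · have hga : a + 1 ≤ q := by omega
        have h5 : (0:ℤ) ≤ q * (q - a - 1) := mul_nonneg (by omega) (by omega)
        have h6 : q * (q - a - 1) = (q^2 - a*q) - q := by ring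
        linarith
  · -- p = 2
    have h3 : 3*(a:ℝ) < 2*(q:ℝ) := by rw [hp'] at h2; push_cast at h2; nlinarith
    have h4 : 3*a + 1 ≤ 2*q := by
      have : 3*a < 2*q := by exact_mod_cast h3
      omega
    have hδ : metδ a q = q^2 - 2*a*q - 4 := by unfold metδ; rw [← hpdef, hp']; ring
    rcases abs_le.mp hd with ⟨hd1, hd2⟩
    rw [hδ] at hd1
    have h5 : (0:ℤ) ≤ q * (2*a - q - 3) := mul_nonneg (by omega) (by omega)
    have h6 : q * (2*a - q - 3) = (2*a*q - q^2) - 3*q := by ring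
    linarith

-- ### lower bound for a = 1

theorem five_le_delta {q : ℤ} (hq : 2 ≤ q) (hess : metEssPrim 1 q) : 5 ≤ |metδ 1 q| := by
  have hp1 : 1 ≤ p0 (metΩ 1) q := ess_p_pos 1 le_rfl hq hess
  have hgcd := ess_gcd 1 hess
  have hprim := hess.1
  have h2 := two_le_delta 1 le_rfl hq hprim
  set p := p0 (metΩ 1) q with hpdef
  set d := metδ 1 q with hddef
  have hdeq : d = q^2 - q*p - p^2 := by rw [hddef]; unfold metδ; rw [← hpdef]; ring
  have hodd : ¬ (2:ℤ) ∣ d := by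
    intro h2d
    have hx : ((d : ZMod 2)) = 0 := by
      rwa [ZMod.intCast_zmod_eq_zero_iff_dvd]
    rw [hdeq] at hx
    push_cast at hx
    have hcases : ∀ x y : ZMod 2, x^2 - x*y - y^2 = 0 → x = 0 ∧ y = 0 := by decide
    have hq2 : (2:ℤ) ∣ q := by
      exact_mod_cast (ZMod.intCast_zmod_eq_zero_iff_dvd q 2).mp (hcases _ _ hx).1
    have hp2 : (2:ℤ) ∣ p := by
      exact_mod_cast (ZMod.intCast_zmod_eq_zero_iff_dvd p 2).mp (hcases _ _ hx).2
    have hdg : (2:ℤ) ∣ (Int.gcd p q : ℤ) := Int.dvd_coe_gcd hp2 hq2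
    rw [hgcd] at hdg
    norm_num at hdg
  have hd5 : ((d : ZMod 5)) = (q:ZMod 5)^2 - (q:ZMod 5)*(p:ZMod 5) - (p:ZMod 5)^2 := by
    rw [hdeq]; push_cast; ring
  have hmod : ∀ x y : ZMod 5, ¬ (x^2 - x*y - y^2 = 2) ∧ ¬ (x^2 - x*y - y^2 = 3) := by decide
  have hval := hmod (q : ZMod 5) (p : ZMod 5)
  rw [← hd5] at hval
  have hne2 : d ≠ 2 := by
    intro h; apply hval.1; rw [h]; norm_num
  have hne3 : d ≠ 3 := by
    intro h; apply hval.2; rw [h]; norm_num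
  have hne2' : d ≠ -2 := by
    intro h; apply hval.2; rw [h]; decide
  have hne3' : d ≠ -3 := by
    intro h; apply hval.1; rw [h]; decide
  rcases le_or_gt 0 d with h0 | h0
  · rw [abs_of_nonneg h0] at h2 ⊢; omega
  · rw [abs_of_neg h0] at h2 ⊢; omega

-- ### B0

theorem metB0_eq (a : ℤ) (ha : 2 ≤ a) : metB0 a = (a:ℝ) := by
  have ha1 : (1:ℤ) ≤ a := by omega
  have hmem : (a:ℝ) ∈ {y : ℝ | ∃ q : ℤ, metEssPrim a q ∧ q ≠ 1 ∧ y = metγt a q} := by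
    refine ⟨a+1, ess_succ a ha, by omega, ?_⟩
    rw [metγt_eq a ha1, delta_succ a ha]
    exact (abs_of_nonneg (by positivity)).symm
  have hlb : ∀ y ∈ {y : ℝ | ∃ q : ℤ, metEssPrim a q ∧ q ≠ 1 ∧ y = metγt a q}, (a:ℝ) ≤ y := by
    rintro y ⟨q, hess, hne, rfl⟩
    have hq1 : 1 ≤ q := hess.1.1
    have hq2 : 2 ≤ q := by omega
    have hle := a_le_delta a ha hq2 hess
    rw [metγt_eq a ha1]
    calc (a:ℝ) ≤ ((|metδ a q| : ℤ):ℝ) := by exact_mod_cast hle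
    _ = |((metδ a q : ℤ):ℝ)| := by rw [Int.cast_abs]
  exact le_antisymm (csInf_le ⟨(a:ℝ), fun y hy => hlb y hy⟩ hmem) (le_csInf ⟨_, hmem⟩ hlb)

theorem metB0_one : metB0 1 = 5 := by
  have hmem : (5:ℝ) ∈ {y : ℝ | ∃ q : ℤ, metEssPrim 1 q ∧ q ≠ 1 ∧ y = metγt 1 q} := by
    refine ⟨7, ess_seven, by omega, ?_⟩
    rw [metγt_eq 1 le_rfl, delta_seven]
    norm_num
  have hlb : ∀ y ∈ {y : ℝ | ∃ q : ℤ, metEssPrim 1 q ∧ q ≠ 1 ∧ y = metγt 1 q}, (5:ℝ) ≤ y := by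
    rintro y ⟨q, hess, hne, rfl⟩
    have hq1 : 1 ≤ q := hess.1.1
    have hq2 : 2 ≤ q := by omega
    have hle := five_le_delta hq2 hess
    rw [metγt_eq 1 le_rfl]
    calc (5:ℝ) ≤ ((|metδ 1 q| : ℤ):ℝ) := by exact_mod_cast hle
    _ = |((metδ 1 q : ℤ):ℝ)| := by rw [Int.cast_abs]
  exact le_antisymm (csInf_le ⟨(5:ℝ), fun y hy => hlb y hy⟩ hmem) (le_csInf ⟨_, hmem⟩ hlb)

end Aux

/-- Proposition 6: for a metallic ratio `Ω = [ā]`, the primary resonances are generated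
by the primitive integer `q̂ = 1`, and the separation is `B₀ = γ̃*_{q₁} = 5` with `q₁ = 7`
if `a = 1`, `B₀ = γ̃*_{q₁} = a` with `q₁ = 3` if `a = 2`, and `B₀ = γ̃*_{q₁} = a` with
`q₁ = a ± 1` (both values) if `a ≥ 3`. -/
theorem splitting_quadratic_stmt14 (a : ℤ) (ha : 1 ≤ a) :
    metPrim a 1 ∧
    (∀ q : ℤ, metPrim a q → q ≠ 1 → metγ a 1 < metγ a q) ∧
    (a = 1 → metEssPrim a 7 ∧ metγt a 7 = 5 ∧ metB0 a = 5) ∧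
    (a = 2 → metEssPrim a 3 ∧ metγt a 3 = (a : ℝ) ∧ metB0 a = (a : ℝ)) ∧
    (3 ≤ a → metEssPrim a (a - 1) ∧ metEssPrim a (a + 1) ∧
      metγt a (a - 1) = (a : ℝ) ∧ metγt a (a + 1) = (a : ℝ) ∧ metB0 a = (a : ℝ)) := by
  refine ⟨prim_one a ha, fun q hp hne => part2 a ha hp hne, ?_, ?_, ?_⟩
  · rintro rfl
    refine ⟨ess_seven, ?_, metB0_one⟩
    rw [metγt_eq 1 le_rfl, delta_seven]
    norm_num
  · rintro rfl
    have h23 : (2:ℤ) + 1 = 3 := by norm_num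
    refine ⟨by rw [← h23]; exact ess_succ 2 le_rfl, ?_, by rw [metB0_eq 2 le_rfl]⟩
    rw [← h23, metγt_eq 2 (by norm_num), delta_succ 2 le_rfl]
    exact abs_of_nonneg (by positivity)
  · intro h3
    have ha2 : (2:ℤ) ≤ a := by omega
    refine ⟨ess_pred a h3, ess_succ a ha2, ?_, ?_, metB0_eq a ha2⟩
    · rw [metγt_eq a ha, delta_pred a h3]
      push_cast
      rw [abs_neg]
      exact abs_of_nonneg (by positivity)
    · rw [metγt_eq a ha, delta_succ a ha2]
      exact abs_of_nonneg (by positivity)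
end

section
/- Let f₁, f₂ : ℝ² → ℝ be differentiable functions, 2π-periodic in each variable, satisfying f_i(ψ)² + (|∂f_i/∂ψ₁(ψ)| + |∂f_i/∂ψ₂(ψ)|)² < 1 for all ψ ∈ ℝ² and i = 1,2. Then the system sin ψ₁ = f₁(ψ), sin ψ₂ = f₂(ψ) has exactly 4 solutions ψ* in the torus T² = (ℝ/2πℤ)², and all of them are simple (the Jacobian determinant of the map ψ ↦ (sin ψ₁ − f₁(ψ), sin ψ₂ − f₂(ψ)) is nonzero at each solution). Furthermore, there is a constant C such that if |f₁(ψ)| ≤ η and |f₂(ψ)| ≤ η for all ψ with η sufficiently small, then each solution ψ* lies within distance Cη of one of the four points (0,0), (0,π), (π,0), (π,π), and each of these four points has exactly one solution nearby. -/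
open Real

noncomputable section

/-- The map `ψ ↦ (sin ψ₁ − f₁(ψ), sin ψ₂ − f₂(ψ))`, whose zeros are the solutions of
the system `sin ψ₁ = f₁(ψ)`, `sin ψ₂ = f₂(ψ)`. -/
def Fmap (f₁ f₂ : ℝ × ℝ → ℝ) : ℝ × ℝ → ℝ × ℝ :=
  fun ψ => (Real.sin ψ.1 - f₁ ψ, Real.sin ψ.2 - f₂ ψ)

/-- The four points `(0,0)`, `(0,π)`, `(π,0)`, `(π,π)`. -/
def basePts : Set (ℝ × ℝ) := {(0, 0), (0, π), (π, 0), (π, π)}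

end

namespace SQ19
open Set


theorem abs_f_lt_one {f : ℝ × ℝ → ℝ}
    (hb : ∀ ψ : ℝ × ℝ, (f ψ) ^ 2 +
      (|fderiv ℝ f ψ ((1 : ℝ), (0 : ℝ))| + |fderiv ℝ f ψ ((0 : ℝ), (1 : ℝ))|) ^ 2 < 1)
    (ψ : ℝ × ℝ) : |f ψ| < 1 := by
  have h := hb ψ
  have h2 : (f ψ) ^ 2 < 1 := by nlinarith [sq_nonneg (|fderiv ℝ f ψ ((1:ℝ),(0:ℝ))| + |fderiv ℝ f ψ ((0:ℝ),(1:ℝ))|)]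
  nlinarith [abs_nonneg (f ψ), sq_abs (f ψ)]

theorem arcsin_comp_strict {f : ℝ × ℝ → ℝ} (hd : Differentiable ℝ f)
    (hb : ∀ ψ : ℝ × ℝ, (f ψ) ^ 2 +
      (|fderiv ℝ f ψ ((1 : ℝ), (0 : ℝ))| + |fderiv ℝ f ψ ((0 : ℝ), (1 : ℝ))|) ^ 2 < 1)
    {x y : ℝ × ℝ} (hxy : x ≠ y) :
    |arcsin (f y) - arcsin (f x)| < dist x y := by
  set M := dist x y with hM
  have hM0 : 0 < M := dist_pos.2 hxy
  set v : ℝ × ℝ := y - x with hv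
  have hv1 : |v.1| ≤ M := by
    rw [hM, Prod.dist_eq]
    refine le_trans ?_ (le_max_left _ _)
    rw [Real.dist_eq, abs_sub_comm]
    simp [hv]
  have hv2 : |v.2| ≤ M := by
    rw [hM, Prod.dist_eq]
    refine le_trans ?_ (le_max_right _ _)
    rw [Real.dist_eq, abs_sub_comm]
    simp [hv]
  -- derivative facts
  have hflt : ∀ ψ, |f ψ| < 1 := abs_f_lt_one hb
  have hgd : ∀ ψ : ℝ × ℝ, HasFDerivAt (fun ψ => arcsin (f ψ))
      ((1 / Real.sqrt (1 - f ψ ^ 2)) • fderiv ℝ f ψ) ψ := by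
    intro ψ
    have h1 : f ψ ≠ -1 := by have := (abs_lt.1 (hflt ψ)).1; intro h; rw [h] at this; linarith
    have h2 : f ψ ≠ 1 := by have := (abs_lt.1 (hflt ψ)).2; intro h; rw [h] at this; linarith
    exact (Real.hasDerivAt_arcsin h1 h2).comp_hasFDerivAt ψ (hd ψ).hasFDerivAt
  set φ : ℝ → ℝ := fun t => arcsin (f (x + t • v)) with hφdef
  set D : ℝ → ℝ := fun t => (1 / Real.sqrt (1 - f (x + t • v) ^ 2)) * (fderiv ℝ f (x + t • v) v) with hDdef
  have hline : ∀ t : ℝ, HasDerivAt (fun t : ℝ => x + t • v) v t := by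
    intro t
    simpa using ((hasDerivAt_id t).smul_const v).const_add x
  have hφ : ∀ t : ℝ, HasDerivAt φ (D t) t := by
    intro t
    have := (hgd (x + t • v)).comp_hasDerivAt t (hline t)
    simpa [hφdef, hDdef, Function.comp_def] using this
  have hD : ∀ t : ℝ, |D t| < M := by
    intro t
    set ψ := x + t • v with hψ
    set a := fderiv ℝ f ψ ((1:ℝ),(0:ℝ)) with ha
    set b := fderiv ℝ f ψ ((0:ℝ),(1:ℝ)) with hbdef
    set s := Real.sqrt (1 - f ψ ^ 2) with hs
    have hs0 : 0 < s := Real.sqrt_pos.2 (by nlinarith [hb ψ, sq_nonneg (|a| + |b|)])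
    have hs2 : s ^ 2 = 1 - f ψ ^ 2 := Real.sq_sqrt (by nlinarith [hb ψ, sq_nonneg (|a| + |b|)])
    have hsum : |a| + |b| < s := by nlinarith [hb ψ, abs_nonneg a, abs_nonneg b]
    have hvdecomp : v = v.1 • ((1:ℝ),(0:ℝ)) + v.2 • ((0:ℝ),(1:ℝ)) := by
      ext <;> simp
    have hDfv : fderiv ℝ f ψ v = v.1 * a + v.2 * b := by
      conv_lhs => rw [hvdecomp]
      rw [map_add, map_smul, map_smul]
      simp [ha, hbdef, smul_eq_mul]
    have habs : |fderiv ℝ f ψ v| ≤ (|a| + |b|) * M := by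
      rw [hDfv]
      calc |v.1 * a + v.2 * b| ≤ |v.1 * a| + |v.2 * b| := abs_add_le _ _
        _ = |v.1| * |a| + |v.2| * |b| := by rw [abs_mul, abs_mul]
        _ ≤ M * |a| + M * |b| := by
            nlinarith [abs_nonneg a, abs_nonneg b, hv1, hv2, abs_nonneg v.1, abs_nonneg v.2]
        _ = (|a| + |b|) * M := by ring
    have heq : |D t| = (1 / s) * |fderiv ℝ f ψ v| := by
      rw [hDdef]
      simp only []
      rw [abs_mul, abs_of_pos (show (0:ℝ) < 1 / s by positivity)]
    calc |D t| ≤ (1 / s) * ((|a| + |b|) * M) := by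
          rw [heq]; exact mul_le_mul_of_nonneg_left habs (by positivity)
      _ < M := by
          rw [div_mul_eq_mul_div, one_mul, div_lt_iff₀ hs0]
          nlinarith
  -- measurability and integrability of deriv φ
  have hderiv_eq : ∀ t, deriv φ t = D t := fun t => (hφ t).deriv
  have hmeas : Measurable (deriv φ) := measurable_deriv φ
  have hbound : ∀ t, ‖deriv φ t‖ ≤ M := by
    intro t; rw [hderiv_eq t]; exact (hD t).le
  have hInt : IntervalIntegrable (deriv φ) MeasureTheory.volume 0 1 := by
    rw [intervalIntegrable_iff]
    refine MeasureTheory.Integrable.mono' (g := fun _ => M)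
      ((MeasureTheory.integrableOn_const_iff (by simp)).2 (Or.inr ?_)) hmeas.aestronglyMeasurable
      (Filter.Eventually.of_forall fun t => hbound t)
    rw [Set.uIoc_of_le (by norm_num : (0:ℝ) ≤ 1)]
    exact measure_Ioc_lt_top
  have hFTC : ∫ t in (0:ℝ)..1, deriv φ t = φ 1 - φ 0 :=
    intervalIntegral.integral_deriv_eq_sub (fun t _ => (hφ t).differentiableAt) hInt
  have hConstInt : IntervalIntegrable (fun _ : ℝ => M) MeasureTheory.volume 0 1 :=
    intervalIntegrable_const
  have hupper : ∫ t in (0:ℝ)..1, deriv φ t < M := by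
    have hpos : 0 < ∫ t in (0:ℝ)..1, (M - deriv φ t) := by
      refine intervalIntegral.intervalIntegral_pos_of_pos (hConstInt.sub hInt) (fun t => ?_) one_pos
      have := hD t; rw [hderiv_eq t]; cases' abs_lt.1 this with h1 h2; linarith
    rw [intervalIntegral.integral_sub hConstInt hInt, intervalIntegral.integral_const] at hpos
    simp at hpos
    linarith
  have hlower : -M < ∫ t in (0:ℝ)..1, deriv φ t := by
    have hpos : 0 < ∫ t in (0:ℝ)..1, (M + deriv φ t) := by
      refine intervalIntegral.intervalIntegral_pos_of_pos (hConstInt.add hInt) (fun t => ?_) one_pos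
      have := hD t; rw [hderiv_eq t]; cases' abs_lt.1 this with h1 h2; linarith
    rw [intervalIntegral.integral_add hConstInt hInt, intervalIntegral.integral_const] at hpos
    simp at hpos
    linarith
  have hφ1 : φ 1 = arcsin (f y) := by simp [hφdef, hv]
  have hφ0 : φ 0 = arcsin (f x) := by simp [hφdef]
  rw [abs_lt]
  constructor <;> [skip; skip]
  · have := hlower; rw [hFTC, hφ1, hφ0] at this; linarith
  · have := hupper; rw [hFTC, hφ1, hφ0] at this; linarith



/-- branch map: `true ↦ arcsin`, `false ↦ π - arcsin`. -/
noncomputable def Amap (b : Bool) (y : ℝ) : ℝ := if b then arcsin y else π - arcsin y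

/-- center of each branch -/
noncomputable def cb (b : Bool) : ℝ := if b then 0 else π

noncomputable def Tmap (f₁ f₂ : ℝ × ℝ → ℝ) (b₁ b₂ : Bool) (ψ : ℝ × ℝ) : ℝ × ℝ :=
  (Amap b₁ (f₁ ψ), Amap b₂ (f₂ ψ))

theorem Amap_dist (b : Bool) (u u' : ℝ) : dist (Amap b u) (Amap b u') = |arcsin u - arcsin u'| := by
  cases b <;> simp [Amap, Real.dist_eq] <;> rw [abs_sub_comm] <;> ring_nf

theorem Amap_sub_cb (b : Bool) (y : ℝ) : Amap b y - cb b = arcsin y ∨ Amap b y - cb b = -arcsin y := by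
  cases b <;> simp [Amap, cb] <;> ring_nf <;> simp

theorem abs_Amap_sub_cb (b : Bool) (y : ℝ) : |Amap b y - cb b| = |arcsin y| := by
  rcases Amap_sub_cb b y with h | h <;> rw [h] <;> simp

theorem abs_Amap_sub_cb_le (b : Bool) (y : ℝ) : |Amap b y - cb b| ≤ π / 2 := by
  rw [abs_Amap_sub_cb]
  rw [abs_le]
  constructor
  · have := neg_pi_div_two_le_arcsin y; linarith
  · exact arcsin_le_pi_div_two y

theorem abs_Amap_sub_cb_lt (b : Bool) {y : ℝ} (hy : |y| < 1) : |Amap b y - cb b| < π / 2 := by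
  rw [abs_Amap_sub_cb, abs_lt]
  rcases abs_lt.1 hy with ⟨h1, h2⟩
  constructor
  · have := Real.neg_pi_div_two_lt_arcsin.2 h1; linarith
  · exact Real.arcsin_lt_pi_div_two.2 h2

theorem sin_Amap (b : Bool) {y : ℝ} (hy : |y| ≤ 1) : Real.sin (Amap b y) = y := by
  rcases abs_le.1 hy with ⟨h1, h2⟩
  cases b <;> simp [Amap, Real.sin_pi_sub, Real.sin_arcsin h1 h2]

/-- classification: a solution of `sin t = y` within `π/2` of the branch center equals `Amap b y`. -/
theorem eq_Amap_of_sin_eq {t y : ℝ} (hy : |y| < 1) (ht : Real.sin t = y) (b : Bool)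
    (hmem : |t - cb b| ≤ π / 2) : t = Amap b y := by
  rcases abs_le.1 hmem with ⟨h1, h2⟩
  cases b
  · -- b = false : center π, t ∈ [π/2, 3π/2], t = π - arcsin y
    simp only [cb, if_false, Bool.false_eq_true] at h1 h2
    have hs : Real.sin (π - t) = y := by rw [Real.sin_pi_sub, ht]
    have : arcsin (Real.sin (π - t)) = π - t :=
      arcsin_sin (by linarith) (by linarith)
    rw [hs] at this
    simp only [Amap, if_false, Bool.false_eq_true]
    linarith
  · -- b = true : center 0
    simp only [cb, if_true] at h1 h2
    simp only [Amap, if_true]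
    rw [← ht]
    exact (arcsin_sin (by linarith) (by linarith)).symm


variable {f₁ f₂ : ℝ × ℝ → ℝ}

theorem Tmap_strict (hd₁ : Differentiable ℝ f₁) (hd₂ : Differentiable ℝ f₂)
    (hb₁ : ∀ ψ : ℝ × ℝ, (f₁ ψ) ^ 2 +
      (|fderiv ℝ f₁ ψ ((1 : ℝ), (0 : ℝ))| + |fderiv ℝ f₁ ψ ((0 : ℝ), (1 : ℝ))|) ^ 2 < 1)
    (hb₂ : ∀ ψ : ℝ × ℝ, (f₂ ψ) ^ 2 +
      (|fderiv ℝ f₂ ψ ((1 : ℝ), (0 : ℝ))| + |fderiv ℝ f₂ ψ ((0 : ℝ), (1 : ℝ))|) ^ 2 < 1)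
    (b₁ b₂ : Bool) {x y : ℝ × ℝ} (hxy : x ≠ y) :
    dist (Tmap f₁ f₂ b₁ b₂ x) (Tmap f₁ f₂ b₁ b₂ y) < dist x y := by
  rw [Prod.dist_eq]
  apply max_lt
  · rw [show (Tmap f₁ f₂ b₁ b₂ x).1 = Amap b₁ (f₁ x) from rfl,
       show (Tmap f₁ f₂ b₁ b₂ y).1 = Amap b₁ (f₁ y) from rfl, Amap_dist]
    rw [abs_sub_comm]
    exact arcsin_comp_strict hd₁ hb₁ hxy
  · rw [show (Tmap f₁ f₂ b₁ b₂ x).2 = Amap b₂ (f₂ x) from rfl,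
       show (Tmap f₁ f₂ b₁ b₂ y).2 = Amap b₂ (f₂ y) from rfl, Amap_dist]
    rw [abs_sub_comm]
    exact arcsin_comp_strict hd₂ hb₂ hxy

theorem Tmap_mem (b₁ b₂ : Bool) (z : ℝ × ℝ) :
    Tmap f₁ f₂ b₁ b₂ z ∈ Icc (cb b₁ - π/2) (cb b₁ + π/2) ×ˢ Icc (cb b₂ - π/2) (cb b₂ + π/2) := by
  have e1 : (Tmap f₁ f₂ b₁ b₂ z).1 = Amap b₁ (f₁ z) := rfl
  have e2 : (Tmap f₁ f₂ b₁ b₂ z).2 = Amap b₂ (f₂ z) := rfl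
  constructor
  · rcases abs_le.1 (abs_Amap_sub_cb_le b₁ (f₁ z)) with ⟨h1, h2⟩
    rw [Set.mem_Icc, e1]
    constructor <;> linarith
  · rcases abs_le.1 (abs_Amap_sub_cb_le b₂ (f₂ z)) with ⟨h1, h2⟩
    rw [Set.mem_Icc, e2]
    constructor <;> linarith

theorem Tmap_continuous (hd₁ : Differentiable ℝ f₁) (hd₂ : Differentiable ℝ f₂) (b₁ b₂ : Bool) :
    Continuous (Tmap f₁ f₂ b₁ b₂) := by
  have hA : ∀ b : Bool, Continuous (Amap b) := by
    intro b
    cases b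
    · exact continuous_const.sub Real.continuous_arcsin
    · exact Real.continuous_arcsin
  exact ((hA b₁).comp hd₁.continuous).prodMk ((hA b₂).comp hd₂.continuous)

theorem Tmap_existsUnique (hd₁ : Differentiable ℝ f₁) (hd₂ : Differentiable ℝ f₂)
    (hb₁ : ∀ ψ : ℝ × ℝ, (f₁ ψ) ^ 2 +
      (|fderiv ℝ f₁ ψ ((1 : ℝ), (0 : ℝ))| + |fderiv ℝ f₁ ψ ((0 : ℝ), (1 : ℝ))|) ^ 2 < 1)
    (hb₂ : ∀ ψ : ℝ × ℝ, (f₂ ψ) ^ 2 +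
      (|fderiv ℝ f₂ ψ ((1 : ℝ), (0 : ℝ))| + |fderiv ℝ f₂ ψ ((0 : ℝ), (1 : ℝ))|) ^ 2 < 1)
    (b₁ b₂ : Bool) : ∃! p : ℝ × ℝ, Tmap f₁ f₂ b₁ b₂ p = p := by
  set T := Tmap f₁ f₂ b₁ b₂ with hT
  set K : Set (ℝ × ℝ) := Icc (cb b₁ - π/2) (cb b₁ + π/2) ×ˢ Icc (cb b₂ - π/2) (cb b₂ + π/2) with hK
  have hKc : IsCompact K := (isCompact_Icc).prod isCompact_Icc
  have hKne : K.Nonempty := ⟨T (0, 0), Tmap_mem b₁ b₂ (0, 0)⟩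
  have hrange : ∀ z, T z ∈ K := Tmap_mem b₁ b₂
  have hTc : Continuous T := Tmap_continuous hd₁ hd₂ b₁ b₂
  have hφc : Continuous fun ψ => dist (T ψ) ψ := (hTc.dist continuous_id)
  obtain ⟨m, hmK, hmin⟩ := hKc.exists_isMinOn hKne hφc.continuousOn
  have hfix : T m = m := by
    by_contra hne
    have h1 : dist (T (T m)) (T m) < dist (T m) m :=
      Tmap_strict hd₁ hd₂ hb₁ hb₂ b₁ b₂ hne
    have h2 : dist (T m) m ≤ dist (T (T m)) (T m) := hmin (hrange m)
    linarith
  refine ⟨m, hfix, fun q hq => ?_⟩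
  by_contra hne
  have := Tmap_strict hd₁ hd₂ hb₁ hb₂ b₁ b₂ (x := q) (y := m) hne
  rw [show Tmap f₁ f₂ b₁ b₂ q = q from hq, show Tmap f₁ f₂ b₁ b₂ m = m from hfix] at this
  exact lt_irrefl _ this



theorem Fmap_hasFDerivAt (hd₁ : Differentiable ℝ f₁) (hd₂ : Differentiable ℝ f₂) (ψ : ℝ × ℝ) :
    HasFDerivAt (Fmap f₁ f₂)
      (((Real.cos ψ.1 • ContinuousLinearMap.fst ℝ ℝ ℝ) - fderiv ℝ f₁ ψ).prod
       ((Real.cos ψ.2 • ContinuousLinearMap.snd ℝ ℝ ℝ) - fderiv ℝ f₂ ψ)) ψ := by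
  have h1 : HasFDerivAt (fun ψ : ℝ × ℝ => Real.sin ψ.1)
      (Real.cos ψ.1 • ContinuousLinearMap.fst ℝ ℝ ℝ) ψ :=
    (Real.hasDerivAt_sin ψ.1).comp_hasFDerivAt ψ hasFDerivAt_fst
  have h2 : HasFDerivAt (fun ψ : ℝ × ℝ => Real.sin ψ.2)
      (Real.cos ψ.2 • ContinuousLinearMap.snd ℝ ℝ ℝ) ψ :=
    (Real.hasDerivAt_sin ψ.2).comp_hasFDerivAt ψ hasFDerivAt_snd
  exact HasFDerivAt.prodMk (h1.sub (hd₁ ψ).hasFDerivAt) (h2.sub (hd₂ ψ).hasFDerivAt)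

theorem det_formula (hd₁ : Differentiable ℝ f₁) (hd₂ : Differentiable ℝ f₂) (ψ : ℝ × ℝ) :
    LinearMap.det (fderiv ℝ (Fmap f₁ f₂) ψ).toLinearMap =
      (Real.cos ψ.1 - fderiv ℝ f₁ ψ ((1:ℝ),(0:ℝ))) * (Real.cos ψ.2 - fderiv ℝ f₂ ψ ((0:ℝ),(1:ℝ)))
      - fderiv ℝ f₁ ψ ((0:ℝ),(1:ℝ)) * fderiv ℝ f₂ ψ ((1:ℝ),(0:ℝ)) := by
  rw [(Fmap_hasFDerivAt hd₁ hd₂ ψ).fderiv]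
  rw [← LinearMap.det_toMatrix (Module.Basis.finTwoProd ℝ), Matrix.det_fin_two]
  simp [LinearMap.toMatrix_apply, Module.Basis.finTwoProd_zero, Module.Basis.finTwoProd_one,
    Module.Basis.coe_finTwoProd_repr, ContinuousLinearMap.prod_apply, ContinuousLinearMap.sub_apply,
    ContinuousLinearMap.smul_apply, ContinuousLinearMap.fst, ContinuousLinearMap.snd]
  try ring

theorem det_ne_zero (hd₁ : Differentiable ℝ f₁) (hd₂ : Differentiable ℝ f₂)
    (hb₁ : ∀ ψ : ℝ × ℝ, (f₁ ψ) ^ 2 +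
      (|fderiv ℝ f₁ ψ ((1 : ℝ), (0 : ℝ))| + |fderiv ℝ f₁ ψ ((0 : ℝ), (1 : ℝ))|) ^ 2 < 1)
    (hb₂ : ∀ ψ : ℝ × ℝ, (f₂ ψ) ^ 2 +
      (|fderiv ℝ f₂ ψ ((1 : ℝ), (0 : ℝ))| + |fderiv ℝ f₂ ψ ((0 : ℝ), (1 : ℝ))|) ^ 2 < 1)
    (ψ : ℝ × ℝ) (h₁ : Real.sin ψ.1 = f₁ ψ) (h₂ : Real.sin ψ.2 = f₂ ψ) :
    LinearMap.det (fderiv ℝ (Fmap f₁ f₂) ψ).toLinearMap ≠ 0 := by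
  rw [det_formula hd₁ hd₂ ψ]
  set a := fderiv ℝ f₁ ψ ((1:ℝ),(0:ℝ)) with ha
  set b := fderiv ℝ f₁ ψ ((0:ℝ),(1:ℝ)) with hbb
  set c := fderiv ℝ f₂ ψ ((1:ℝ),(0:ℝ)) with hc
  set d := fderiv ℝ f₂ ψ ((0:ℝ),(1:ℝ)) with hdd
  have hcos1 : (|a| + |b|) < |Real.cos ψ.1| := by
    have hsq : Real.cos ψ.1 ^ 2 = 1 - f₁ ψ ^ 2 := by
      have := Real.sin_sq_add_cos_sq ψ.1; rw [h₁] at this; linarith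
    have h := hb₁ ψ
    nlinarith [abs_nonneg a, abs_nonneg b, abs_nonneg (Real.cos ψ.1), sq_abs (Real.cos ψ.1)]
  have hcos2 : (|c| + |d|) < |Real.cos ψ.2| := by
    have hsq : Real.cos ψ.2 ^ 2 = 1 - f₂ ψ ^ 2 := by
      have := Real.sin_sq_add_cos_sq ψ.2; rw [h₂] at this; linarith
    have h := hb₂ ψ
    nlinarith [abs_nonneg c, abs_nonneg d, abs_nonneg (Real.cos ψ.2), sq_abs (Real.cos ψ.2)]
  have hA : |b| < |Real.cos ψ.1 - a| := by
    have := abs_sub_abs_le_abs_sub (Real.cos ψ.1) a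
    linarith [abs_nonneg a]
  have hB : |c| < |Real.cos ψ.2 - d| := by
    have := abs_sub_abs_le_abs_sub (Real.cos ψ.2) d
    linarith [abs_nonneg d]
  intro hdet
  have heq : (Real.cos ψ.1 - a) * (Real.cos ψ.2 - d) = b * c := by linarith
  have habs : |Real.cos ψ.1 - a| * |Real.cos ψ.2 - d| = |b| * |c| := by
    rw [← abs_mul, ← abs_mul, heq]
  have hlt : |b| * |c| < |Real.cos ψ.1 - a| * |Real.cos ψ.2 - d| :=
    mul_lt_mul'' hA hB (abs_nonneg b) (abs_nonneg c)
  linarith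



theorem abs_arcsin_le {y : ℝ} (hy : |y| ≤ 1) : |arcsin y| ≤ π / 2 * |y| := by
  have key : ∀ z : ℝ, 0 ≤ z → z ≤ 1 → arcsin z ≤ π / 2 * z := by
    intro z h0 h1
    have hπ := pi_pos
    have hmem : π / 2 * z ∈ Icc (-(π/2)) (π/2) := by
      constructor <;> nlinarith
    rw [arcsin_le_iff_le_sin ⟨by linarith, h1⟩ hmem]
    have h2 := Real.mul_le_sin (x := π/2 * z) (by positivity) (by nlinarith)
    have h3 : 2 / π * (π / 2 * z) = z := by field_simp
    linarith [h3 ▸ h2]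
  rcases le_or_gt 0 y with h | h
  · rw [abs_of_nonneg h, abs_of_nonneg (arcsin_nonneg.2 h)]
    exact key y h (by rwa [abs_of_nonneg h] at hy)
  · have h1 : arcsin y < 0 := by
      rw [← Real.arcsin_zero]
      refine Real.strictMonoOn_arcsin ⟨?_, ?_⟩ ⟨by norm_num, by norm_num⟩ h
      · rcases abs_le.1 hy with ⟨hl, _⟩; linarith
      · linarith
    rw [abs_of_neg h, abs_of_neg h1, ← Real.arcsin_neg]
    exact key (-y) (by linarith) (by rcases abs_le.1 hy with ⟨hl, _⟩; linarith)

theorem near_pi_multiple {t η : ℝ} (hη : 0 ≤ η) (hs : |Real.sin t| ≤ η) :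
    ∃ k : ℤ, |t - k * π| ≤ π / 2 * η := by
  have hπ := pi_pos
  set k : ℤ := round (t / π) with hk
  refine ⟨k, ?_⟩
  have hd : |t - k * π| ≤ π / 2 := by
    have h1 : |t / π - k| ≤ 1 / 2 := abs_sub_round (t / π)
    have h2 : t - k * π = π * (t / π - k) := by field_simp
    rw [h2, abs_mul, abs_of_pos hπ]
    nlinarith
  set d : ℝ := t - k * π with hdd
  have hsin : |Real.sin d| = |Real.sin t| := by
    have : Real.sin (d + k * π) = (-1 : ℝ) ^ k * Real.sin d := Real.sin_add_int_mul_pi d k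
    have ht : t = d + k * π := by rw [hdd]; ring
    rw [ht, this, abs_mul]
    have h5 : |(-1 : ℝ) ^ k| = 1 := by
      rcases Int.even_or_odd k with he | ho
      · rw [he.neg_one_zpow]; simp
      · rw [ho.neg_one_zpow]; simp
    rw [h5, one_mul]
  have hjordan : 2 / π * |d| ≤ |Real.sin d| := by
    rcases le_or_gt 0 d with h | h
    · have := Real.mul_le_sin (x := d) h (by rwa [abs_of_nonneg h] at hd)
      rw [abs_of_nonneg h]
      exact this.trans (le_abs_self _)
    · have hd' : -d ≤ π / 2 := by rwa [abs_of_neg h] at hd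
      have := Real.mul_le_sin (x := -d) (by linarith) hd'
      rw [Real.sin_neg] at this
      rw [abs_of_neg h]
      exact this.trans (neg_le_abs _)
  have hend : 2 / π * |d| ≤ η := by rw [hsin] at hjordan; linarith
  have : |d| ≤ π / 2 * η := by
    rw [div_mul_eq_mul_div, div_le_iff₀ hπ] at hend
    nlinarith
  exact this



theorem per_shift {f : ℝ × ℝ → ℝ}
    (hper : ∀ ψ : ℝ × ℝ, f (ψ.1 + 2 * π, ψ.2) = f ψ ∧ f (ψ.1, ψ.2 + 2 * π) = f ψ)
    (x y : ℝ) : f (x - 2 * π, y) = f (x, y) ∧ f (x, y - 2 * π) = f (x, y) := by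
  constructor
  · have h : f (x - 2 * π + 2 * π, y) = f (x - 2 * π, y) := (hper (x - 2 * π, y)).1
    rw [show x - 2 * π + 2 * π = x by ring] at h
    exact h.symm
  · have h : f (x, y - 2 * π + 2 * π) = f (x, y - 2 * π) := (hper (x, y - 2 * π)).2
    rw [show y - 2 * π + 2 * π = y by ring] at h
    exact h.symm

noncomputable def rr (x : ℝ) : ℝ := if x < 3 * π / 2 then x else x - 2 * π
noncomputable def uu (x : ℝ) : ℝ := if x < 0 then x + 2 * π else x

theorem rr_mem {x : ℝ} (h0 : 0 ≤ x) (h2 : x < 2 * π) : -(π / 2) ≤ rr x ∧ rr x < 3 * π / 2 := by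
  unfold rr; split_ifs with h <;> constructor <;> linarith [pi_pos]

theorem uu_rr {x : ℝ} (h0 : 0 ≤ x) (h2 : x < 2 * π) : uu (rr x) = x := by
  unfold rr uu; split_ifs <;> linarith [pi_pos]

theorem rr_cases (x : ℝ) : rr x = x ∨ rr x = x - 2 * π := by
  unfold rr; split_ifs <;> [exact Or.inl rfl; exact Or.inr rfl]

theorem sin_rr (x : ℝ) : Real.sin (rr x) = Real.sin x := by
  rcases rr_cases x with h | h <;> rw [h]
  exact Real.sin_sub_two_pi x

theorem uu_cases (x : ℝ) : uu x = x ∨ uu x = x + 2 * π := by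
  unfold uu; split_ifs <;> [exact Or.inr rfl; exact Or.inl rfl]

theorem uu_mem {x : ℝ} (h1 : -(π / 2) < x) (h2 : x < 3 * π / 2) : 0 ≤ uu x ∧ uu x < 2 * π := by
  unfold uu; split_ifs with h <;> constructor <;> linarith [pi_pos]

theorem sin_uu (x : ℝ) : Real.sin (uu x) = Real.sin x := by
  rcases uu_cases x with h | h <;> rw [h]
  exact Real.sin_add_two_pi x

theorem f_rr {f : ℝ × ℝ → ℝ}
    (hper : ∀ ψ : ℝ × ℝ, f (ψ.1 + 2 * π, ψ.2) = f ψ ∧ f (ψ.1, ψ.2 + 2 * π) = f ψ)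
    (ψ : ℝ × ℝ) : f (rr ψ.1, rr ψ.2) = f ψ := by
  have step2 : f (ψ.1, rr ψ.2) = f (ψ.1, ψ.2) := by
    rcases rr_cases ψ.2 with h | h <;> rw [h]
    exact (per_shift hper ψ.1 ψ.2).2
  have step1 : f (rr ψ.1, rr ψ.2) = f (ψ.1, rr ψ.2) := by
    rcases rr_cases ψ.1 with h | h <;> rw [h]
    exact (per_shift hper ψ.1 (rr ψ.2)).1
  rw [step1, step2]

theorem f_uu {f : ℝ × ℝ → ℝ}
    (hper : ∀ ψ : ℝ × ℝ, f (ψ.1 + 2 * π, ψ.2) = f ψ ∧ f (ψ.1, ψ.2 + 2 * π) = f ψ)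
    (ψ : ℝ × ℝ) : f (uu ψ.1, uu ψ.2) = f ψ := by
  have step2 : f (ψ.1, uu ψ.2) = f (ψ.1, ψ.2) := by
    rcases uu_cases ψ.2 with h | h <;> rw [h]
    exact (hper (ψ.1, ψ.2)).2
  have step1 : f (uu ψ.1, uu ψ.2) = f (ψ.1, uu ψ.2) := by
    rcases uu_cases ψ.1 with h | h <;> rw [h]
    exact (hper (ψ.1, uu ψ.2)).1
  rw [step1, step2]


end SQ19

/-- Lemma 7 (2-dimensional fixed point theorem): if `f₁, f₂ : 𝕋² → ℝ` are differentiable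
and satisfy `f_i² + (|∂f_i/∂ψ₁| + |∂f_i/∂ψ₂|)² < 1`, then the system `sin ψ₁ = f₁(ψ)`,
`sin ψ₂ = f₂(ψ)` has exactly 4 solutions on the torus, all simple; moreover, there is a
constant `C` such that if `|f₁|, |f₂| ≤ η` with `η` sufficiently small, every solution
is within `Cη` of one of `(0,0)`, `(0,π)`, `(π,0)`, `(π,π)` (modulo `2π` in each
coordinate), and each of these four points has exactly one solution nearby. -/
theorem splitting_quadratic_stmt19 (f₁ f₂ : ℝ × ℝ → ℝ)
    (hd₁ : Differentiable ℝ f₁) (hd₂ : Differentiable ℝ f₂)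
    (hper₁ : ∀ ψ : ℝ × ℝ, f₁ (ψ.1 + 2 * π, ψ.2) = f₁ ψ ∧ f₁ (ψ.1, ψ.2 + 2 * π) = f₁ ψ)
    (hper₂ : ∀ ψ : ℝ × ℝ, f₂ (ψ.1 + 2 * π, ψ.2) = f₂ ψ ∧ f₂ (ψ.1, ψ.2 + 2 * π) = f₂ ψ)
    (hb₁ : ∀ ψ : ℝ × ℝ, (f₁ ψ) ^ 2 +
      (|fderiv ℝ f₁ ψ ((1 : ℝ), (0 : ℝ))| + |fderiv ℝ f₁ ψ ((0 : ℝ), (1 : ℝ))|) ^ 2 < 1)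
    (hb₂ : ∀ ψ : ℝ × ℝ, (f₂ ψ) ^ 2 +
      (|fderiv ℝ f₂ ψ ((1 : ℝ), (0 : ℝ))| + |fderiv ℝ f₂ ψ ((0 : ℝ), (1 : ℝ))|) ^ 2 < 1) :
    ({ψ ∈ Set.Ico (0 : ℝ) (2 * π) ×ˢ Set.Ico (0 : ℝ) (2 * π) |
        Real.sin ψ.1 = f₁ ψ ∧ Real.sin ψ.2 = f₂ ψ}.ncard = 4) ∧
    (∀ ψ : ℝ × ℝ, Real.sin ψ.1 = f₁ ψ → Real.sin ψ.2 = f₂ ψ →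
      LinearMap.det (fderiv ℝ (Fmap f₁ f₂) ψ).toLinearMap ≠ 0) ∧
    (∃ C : ℝ, 0 < C ∧ ∃ η₀ : ℝ, 0 < η₀ ∧ ∀ η : ℝ, 0 < η → η ≤ η₀ →
      (∀ ψ : ℝ × ℝ, |f₁ ψ| ≤ η ∧ |f₂ ψ| ≤ η) →
      (∀ ψ : ℝ × ℝ, Real.sin ψ.1 = f₁ ψ → Real.sin ψ.2 = f₂ ψ →
        ∃ ψ0 ∈ basePts, ∃ j l : ℤ,
          dist ψ (ψ0.1 + 2 * π * (j : ℝ), ψ0.2 + 2 * π * (l : ℝ)) ≤ C * η) ∧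
      (∀ ψ0 ∈ basePts, ∃! ψ : ℝ × ℝ,
        (Real.sin ψ.1 = f₁ ψ ∧ Real.sin ψ.2 = f₂ ψ) ∧ dist ψ ψ0 ≤ C * η)) := by
  classical
  have hπ : (0:ℝ) < π := Real.pi_pos
  have hf1 : ∀ ψ, |f₁ ψ| < 1 := SQ19.abs_f_lt_one hb₁
  have hf2 : ∀ ψ, |f₂ ψ| < 1 := SQ19.abs_f_lt_one hb₂
  have hEU : ∀ b₁ b₂ : Bool, ∃! q : ℝ × ℝ, SQ19.Tmap f₁ f₂ b₁ b₂ q = q :=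
    fun b₁ b₂ => SQ19.Tmap_existsUnique hd₁ hd₂ hb₁ hb₂ b₁ b₂
  choose p hp using hEU
  have hpfix : ∀ b₁ b₂, SQ19.Tmap f₁ f₂ b₁ b₂ (p b₁ b₂) = p b₁ b₂ := fun b₁ b₂ => (hp b₁ b₂).1
  have hpuniq : ∀ b₁ b₂ q, SQ19.Tmap f₁ f₂ b₁ b₂ q = q → q = p b₁ b₂ :=
    fun b₁ b₂ q hq => (hp b₁ b₂).2 q hq
  have hp1 : ∀ b₁ b₂, (p b₁ b₂).1 = SQ19.Amap b₁ (f₁ (p b₁ b₂)) := by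
    intro b₁ b₂
    conv_lhs => rw [← hpfix b₁ b₂]
    rfl
  have hp2 : ∀ b₁ b₂, (p b₁ b₂).2 = SQ19.Amap b₂ (f₂ (p b₁ b₂)) := by
    intro b₁ b₂
    conv_lhs => rw [← hpfix b₁ b₂]
    rfl
  have hsolp : ∀ b₁ b₂, Real.sin (p b₁ b₂).1 = f₁ (p b₁ b₂) ∧
      Real.sin (p b₁ b₂).2 = f₂ (p b₁ b₂) := by
    intro b₁ b₂
    constructor
    · rw [hp1 b₁ b₂]; exact SQ19.sin_Amap b₁ (hf1 _).le
    · rw [hp2 b₁ b₂]; exact SQ19.sin_Amap b₂ (hf2 _).le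
  have hnear1 : ∀ b₁ b₂, |(p b₁ b₂).1 - SQ19.cb b₁| < π / 2 := by
    intro b₁ b₂; rw [hp1 b₁ b₂]; exact SQ19.abs_Amap_sub_cb_lt b₁ (hf1 _)
  have hnear2 : ∀ b₁ b₂, |(p b₁ b₂).2 - SQ19.cb b₂| < π / 2 := by
    intro b₁ b₂; rw [hp2 b₁ b₂]; exact SQ19.abs_Amap_sub_cb_lt b₂ (hf2 _)
  have hcb_t : SQ19.cb true = 0 := rfl
  have hcb_f : SQ19.cb false = π := rfl
  have hchar : ∀ (ψ : ℝ × ℝ) (b₁ b₂ : Bool), Real.sin ψ.1 = f₁ ψ → Real.sin ψ.2 = f₂ ψ →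
      |ψ.1 - SQ19.cb b₁| ≤ π / 2 → |ψ.2 - SQ19.cb b₂| ≤ π / 2 → ψ = p b₁ b₂ := by
    intro ψ b₁ b₂ hs1 hs2 h1 h2
    refine hpuniq b₁ b₂ ψ ?_
    have e1 : SQ19.Amap b₁ (f₁ ψ) = ψ.1 := (SQ19.eq_Amap_of_sin_eq (hf1 ψ) hs1 b₁ h1).symm
    have e2 : SQ19.Amap b₂ (f₂ ψ) = ψ.2 := (SQ19.eq_Amap_of_sin_eq (hf2 ψ) hs2 b₂ h2).symm
    exact Prod.ext e1 e2
  have hne1 : ∀ b₂ b₂' : Bool, p true b₂ ≠ p false b₂' := by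
    intro b₂ b₂' h
    have a1 := abs_lt.1 (hnear1 true b₂)
    have a2 := abs_lt.1 (hnear1 false b₂')
    rw [hcb_t] at a1; rw [hcb_f] at a2
    rw [h] at a1
    rcases a1 with ⟨a11, a12⟩; rcases a2 with ⟨a21, a22⟩
    linarith
  have hne2 : ∀ b₁ : Bool, p b₁ true ≠ p b₁ false := by
    intro b₁ h
    have a1 := abs_lt.1 (hnear2 b₁ true)
    have a2 := abs_lt.1 (hnear2 b₁ false)
    rw [hcb_t] at a1; rw [hcb_f] at a2
    rw [h] at a1
    rcases a1 with ⟨a11, a12⟩; rcases a2 with ⟨a21, a22⟩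
    linarith
  refine ⟨?_, fun ψ h1 h2 => SQ19.det_ne_zero hd₁ hd₂ hb₁ hb₂ ψ h1 h2, ?_⟩
  · -- exact count of solutions
    have hrange : ∀ (x c : ℝ), (c = 0 ∨ c = π) → |x - c| < π / 2 →
        -(π / 2) < x ∧ x < 3 * π / 2 := by
      intro x c hc h
      rcases abs_lt.1 h with ⟨u1, u2⟩
      rcases hc with rfl | rfl <;> constructor <;> linarith
    have hcb01 : ∀ b : Bool, SQ19.cb b = 0 ∨ SQ19.cb b = π := by
      intro b; cases b
      · exact Or.inr rfl
      · exact Or.inl rfl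
    have hPb : ∀ b₁ b₂, (-(π/2) < (p b₁ b₂).1 ∧ (p b₁ b₂).1 < 3*π/2) ∧
        (-(π/2) < (p b₁ b₂).2 ∧ (p b₁ b₂).2 < 3*π/2) := fun b₁ b₂ =>
      ⟨hrange _ _ (hcb01 b₁) (hnear1 b₁ b₂), hrange _ _ (hcb01 b₂) (hnear2 b₁ b₂)⟩
    have hmem4E : ∀ z : ℝ × ℝ,
        z ∈ ({p true true, p true false, p false true, p false false} : Set (ℝ × ℝ)) →
        ∃ b₁ b₂ : Bool, z = p b₁ b₂ := by
      intro z hz4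
      simp only [Set.mem_insert_iff, Set.mem_singleton_iff] at hz4
      rcases hz4 with rfl | rfl | rfl | rfl
      exacts [⟨true, true, rfl⟩, ⟨true, false, rfl⟩, ⟨false, true, rfl⟩, ⟨false, false, rfl⟩]
    have himg : {ψ ∈ Set.Ico (0:ℝ) (2*π) ×ˢ Set.Ico (0:ℝ) (2*π) |
        Real.sin ψ.1 = f₁ ψ ∧ Real.sin ψ.2 = f₂ ψ} =
        (fun q : ℝ × ℝ => (SQ19.uu q.1, SQ19.uu q.2)) ''
          {p true true, p true false, p false true, p false false} := by
      ext ψ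
      constructor
      · rintro ⟨⟨⟨h10, h12⟩, h20, h22⟩, hs1, hs2⟩
        have hq1m := SQ19.rr_mem h10 h12
        have hq2m := SQ19.rr_mem h20 h22
        have hqs1 : Real.sin (SQ19.rr ψ.1) = f₁ (SQ19.rr ψ.1, SQ19.rr ψ.2) := by
          rw [SQ19.sin_rr, SQ19.f_rr hper₁ ψ]; exact hs1
        have hqs2 : Real.sin (SQ19.rr ψ.2) = f₂ (SQ19.rr ψ.1, SQ19.rr ψ.2) := by
          rw [SQ19.sin_rr, SQ19.f_rr hper₂ ψ]; exact hs2
        have huq : (fun q : ℝ × ℝ => (SQ19.uu q.1, SQ19.uu q.2)) (SQ19.rr ψ.1, SQ19.rr ψ.2) = ψ := by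
          show (SQ19.uu (SQ19.rr ψ.1), SQ19.uu (SQ19.rr ψ.2)) = ψ
          rw [SQ19.uu_rr h10 h12, SQ19.uu_rr h20 h22]
        have hmem4 : ((SQ19.rr ψ.1, SQ19.rr ψ.2) : ℝ × ℝ) ∈
            ({p true true, p true false, p false true, p false false} : Set (ℝ × ℝ)) := by
          rcases lt_or_ge (SQ19.rr ψ.1) (π/2) with c1 | c1 <;>
            rcases lt_or_ge (SQ19.rr ψ.2) (π/2) with c2 | c2
          · have he := hchar (SQ19.rr ψ.1, SQ19.rr ψ.2) true true hqs1 hqs2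
              (by rw [hcb_t, abs_le]; constructor <;> [linarith [hq1m.1]; linarith])
              (by rw [hcb_t, abs_le]; constructor <;> [linarith [hq2m.1]; linarith])
            rw [he]; simp
          · have he := hchar (SQ19.rr ψ.1, SQ19.rr ψ.2) true false hqs1 hqs2
              (by rw [hcb_t, abs_le]; constructor <;> [linarith [hq1m.1]; linarith])
              (by rw [hcb_f, abs_le]; constructor <;> [linarith; linarith [hq2m.2]])
            rw [he]; simp
          · have he := hchar (SQ19.rr ψ.1, SQ19.rr ψ.2) false true hqs1 hqs2
              (by rw [hcb_f, abs_le]; constructor <;> [linarith; linarith [hq1m.2]])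
              (by rw [hcb_t, abs_le]; constructor <;> [linarith [hq2m.1]; linarith])
            rw [he]; simp
          · have he := hchar (SQ19.rr ψ.1, SQ19.rr ψ.2) false false hqs1 hqs2
              (by rw [hcb_f, abs_le]; constructor <;> [linarith; linarith [hq1m.2]])
              (by rw [hcb_f, abs_le]; constructor <;> [linarith; linarith [hq2m.2]])
            rw [he]; simp
        exact ⟨(SQ19.rr ψ.1, SQ19.rr ψ.2), hmem4, huq⟩
      · rintro ⟨z, hz4, rfl⟩
        obtain ⟨b₁, b₂, rfl⟩ := hmem4E z hz4
        have hb1 := (hPb b₁ b₂).1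
        have hb2 := (hPb b₁ b₂).2
        refine ⟨⟨?_, ?_⟩, ?_, ?_⟩
        · exact SQ19.uu_mem hb1.1 hb1.2
        · exact SQ19.uu_mem hb2.1 hb2.2
        · show Real.sin (SQ19.uu (p b₁ b₂).1) = f₁ (SQ19.uu (p b₁ b₂).1, SQ19.uu (p b₁ b₂).2)
          rw [SQ19.sin_uu, SQ19.f_uu hper₁]
          exact (hsolp b₁ b₂).1
        · show Real.sin (SQ19.uu (p b₁ b₂).2) = f₂ (SQ19.uu (p b₁ b₂).1, SQ19.uu (p b₁ b₂).2)
          rw [SQ19.sin_uu, SQ19.f_uu hper₂]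
          exact (hsolp b₁ b₂).2
    have hu1inj : ∀ a b : ℝ, -(π/2) < a → a < 3*π/2 → -(π/2) < b → b < 3*π/2 →
        SQ19.uu a = SQ19.uu b → a = b := by
      intro a b h1 h2 h3 h4 h
      unfold SQ19.uu at h
      split_ifs at h <;> linarith
    have hinj : Set.InjOn (fun q : ℝ × ℝ => (SQ19.uu q.1, SQ19.uu q.2))
        ({p true true, p true false, p false true, p false false} : Set (ℝ × ℝ)) := by
      intro z hz w hw h
      obtain ⟨b₁, b₂, rfl⟩ := hmem4E z hz
      obtain ⟨c₁, c₂, rfl⟩ := hmem4E w hw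
      have e1 : SQ19.uu (p b₁ b₂).1 = SQ19.uu (p c₁ c₂).1 := congrArg Prod.fst h
      have e2 : SQ19.uu (p b₁ b₂).2 = SQ19.uu (p c₁ c₂).2 := congrArg Prod.snd h
      exact Prod.ext
        (hu1inj _ _ (hPb b₁ b₂).1.1 (hPb b₁ b₂).1.2 (hPb c₁ c₂).1.1 (hPb c₁ c₂).1.2 e1)
        (hu1inj _ _ (hPb b₁ b₂).2.1 (hPb b₁ b₂).2.2 (hPb c₁ c₂).2.1 (hPb c₁ c₂).2.2 e2)
    rw [himg, Set.ncard_image_of_injOn hinj]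
    have c3 : ({p false true, p false false} : Set (ℝ × ℝ)).ncard = 2 := by
      rw [Set.ncard_insert_of_notMem (by simp [hne2 false]) (Set.toFinite _),
        Set.ncard_singleton]
    have c2 : ({p true false, p false true, p false false} : Set (ℝ × ℝ)).ncard = 3 := by
      rw [Set.ncard_insert_of_notMem (by simp [hne1 false true, hne1 false false])
        (Set.toFinite _), c3]
    rw [Set.ncard_insert_of_notMem (by simp [hne2 true, hne1 true true, hne1 true false])
      (Set.toFinite _), c2]

  · -- localization
    refine ⟨π / 2, by positivity, 1 / 2, by norm_num, fun η hη0 hηle hfb => ⟨?_, ?_⟩⟩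
    · intro ψ hs1 hs2
      have hk' : |Real.sin ψ.1| ≤ η := by rw [hs1]; exact (hfb ψ).1
      have hl' : |Real.sin ψ.2| ≤ η := by rw [hs2]; exact (hfb ψ).2
      obtain ⟨k, hk⟩ := SQ19.near_pi_multiple hη0.le hk'
      obtain ⟨l, hl⟩ := SQ19.near_pi_multiple hη0.le hl'
      have hdist : ∀ (a b : ℝ), |ψ.1 - a| ≤ π / 2 * η → |ψ.2 - b| ≤ π / 2 * η →
          dist ψ (a, b) ≤ π / 2 * η := by
        intro a b h1 h2
        rw [Prod.dist_eq]
        refine max_le ?_ ?_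
        · rw [show dist ψ.1 (a, b).1 = |ψ.1 - a| from Real.dist_eq _ _]; exact h1
        · rw [show dist ψ.2 (a, b).2 = |ψ.2 - b| from Real.dist_eq _ _]; exact h2
      rcases Int.even_or_odd k with ⟨j, hj⟩ | ⟨j, hj⟩ <;>
        rcases Int.even_or_odd l with ⟨m, hm⟩ | ⟨m, hm⟩
      · refine ⟨(0, 0), by simp [basePts], j, m, hdist _ _ ?_ ?_⟩
        · rw [show ((0:ℝ),(0:ℝ)).1 + 2*π*(j:ℝ) = (k:ℝ)*π by
            show (0:ℝ) + 2*π*(j:ℝ) = (k:ℝ)*π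
            rw [hj]; push_cast; ring]
          exact hk
        · rw [show ((0:ℝ),(0:ℝ)).2 + 2*π*(m:ℝ) = (l:ℝ)*π by
            show (0:ℝ) + 2*π*(m:ℝ) = (l:ℝ)*π
            rw [hm]; push_cast; ring]
          exact hl
      · refine ⟨(0, π), by simp [basePts], j, m, hdist _ _ ?_ ?_⟩
        · rw [show ((0:ℝ), π).1 + 2*π*(j:ℝ) = (k:ℝ)*π by
            show (0:ℝ) + 2*π*(j:ℝ) = (k:ℝ)*π
            rw [hj]; push_cast; ring]
          exact hk
        · rw [show ((0:ℝ), π).2 + 2*π*(m:ℝ) = (l:ℝ)*π by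
            show π + 2*π*(m:ℝ) = (l:ℝ)*π
            rw [hm]; push_cast; ring]
          exact hl
      · refine ⟨(π, 0), by simp [basePts], j, m, hdist _ _ ?_ ?_⟩
        · rw [show (π, (0:ℝ)).1 + 2*π*(j:ℝ) = (k:ℝ)*π by
            show π + 2*π*(j:ℝ) = (k:ℝ)*π
            rw [hj]; push_cast; ring]
          exact hk
        · rw [show (π, (0:ℝ)).2 + 2*π*(m:ℝ) = (l:ℝ)*π by
            show (0:ℝ) + 2*π*(m:ℝ) = (l:ℝ)*π
            rw [hm]; push_cast; ring]
          exact hl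
      · refine ⟨(π, π), by simp [basePts], j, m, hdist _ _ ?_ ?_⟩
        · rw [show ((π:ℝ), (π:ℝ)).1 + 2*π*(j:ℝ) = (k:ℝ)*π by
            show π + 2*π*(j:ℝ) = (k:ℝ)*π
            rw [hj]; push_cast; ring]
          exact hk
        · rw [show ((π:ℝ), (π:ℝ)).2 + 2*π*(m:ℝ) = (l:ℝ)*π by
            show π + 2*π*(m:ℝ) = (l:ℝ)*π
            rw [hm]; push_cast; ring]
          exact hl
    · intro ψ0 hψ0
      have hbp : ∃ b₁ b₂ : Bool, ψ0 = (SQ19.cb b₁, SQ19.cb b₂) := by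
        simp only [basePts, Set.mem_insert_iff, Set.mem_singleton_iff] at hψ0
        rcases hψ0 with rfl | rfl | rfl | rfl
        · exact ⟨true, true, rfl⟩
        · exact ⟨true, false, rfl⟩
        · exact ⟨false, true, rfl⟩
        · exact ⟨false, false, rfl⟩
      obtain ⟨b₁, b₂, rfl⟩ := hbp
      refine ⟨p b₁ b₂, ⟨hsolp b₁ b₂, ?_⟩, ?_⟩
      · rw [Prod.dist_eq]
        refine max_le ?_ ?_
        · rw [show dist (p b₁ b₂).1 ((SQ19.cb b₁, SQ19.cb b₂)).1 = |(p b₁ b₂).1 - SQ19.cb b₁|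
            from Real.dist_eq _ _]
          have e : |(p b₁ b₂).1 - SQ19.cb b₁| = |Real.arcsin (f₁ (p b₁ b₂))| := by
            rw [hp1 b₁ b₂]; exact SQ19.abs_Amap_sub_cb _ _
          rw [e]
          have h1 := SQ19.abs_arcsin_le (hf1 (p b₁ b₂)).le
          have h2 := (hfb (p b₁ b₂)).1
          nlinarith [abs_nonneg (f₁ (p b₁ b₂)), abs_nonneg (Real.arcsin (f₁ (p b₁ b₂)))]
        · rw [show dist (p b₁ b₂).2 ((SQ19.cb b₁, SQ19.cb b₂)).2 = |(p b₁ b₂).2 - SQ19.cb b₂|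
            from Real.dist_eq _ _]
          have e : |(p b₁ b₂).2 - SQ19.cb b₂| = |Real.arcsin (f₂ (p b₁ b₂))| := by
            rw [hp2 b₁ b₂]; exact SQ19.abs_Amap_sub_cb _ _
          rw [e]
          have h1 := SQ19.abs_arcsin_le (hf2 (p b₁ b₂)).le
          have h2 := (hfb (p b₁ b₂)).2
          nlinarith [abs_nonneg (f₂ (p b₁ b₂)), abs_nonneg (Real.arcsin (f₂ (p b₁ b₂)))]
      · rintro q ⟨⟨hq1, hq2⟩, hqd⟩
        rw [Prod.dist_eq] at hqd
        have hd1 : |q.1 - SQ19.cb b₁| ≤ π / 2 := by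
          have h := le_trans (le_max_left _ _) hqd
          rw [show dist q.1 ((SQ19.cb b₁, SQ19.cb b₂)).1 = |q.1 - SQ19.cb b₁|
            from Real.dist_eq _ _] at h
          nlinarith
        have hd2 : |q.2 - SQ19.cb b₂| ≤ π / 2 := by
          have h := le_trans (le_max_right _ _) hqd
          rw [show dist q.2 ((SQ19.cb b₁, SQ19.cb b₂)).2 = |q.2 - SQ19.cb b₂|
            from Real.dist_eq _ _] at h
          nlinarith
        exact hchar q b₁ b₂ hq1 hq2 hd1 hd2
end
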